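/- arXiv:2502.11795 — 4 statements merged into one kernel-verified Lean document; each statement's English description precedes it below -/
import Mathlib

section
/- Two quantales A and B are Morita equivalent if and only if there exists a projective generator Q in the category Mod_A(Sl) of right A-modules such that B is isomorphic as a quantale to the endomorphism quantale Hom_A(Q,Q). -/
open CategoryTheory Set

universe u v w

class UQuantale (A : Type u) extends CompleteLattice A, Monoid A where
  mul_sSup : ∀ (a : A) (s : Set A), a * sSup s = ⨆ b ∈ s, a * b
  sSup_mul : ∀ (s : Set A) (b : A), sSup s * b = ⨆ a ∈ s, a * b

namespace UQuantale
variable {A : Type u} [UQuantale A]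

theorem mul_iSup {ι : Sort w} (a : A) (f : ι → A) : a * (⨆ i, f i) = ⨆ i, a * f i := by
  rw [iSup, mul_sSup]; exact iSup_range

theorem iSup_mul {ι : Sort w} (f : ι → A) (b : A) : (⨆ i, f i) * b = ⨆ i, f i * b := by
  rw [iSup, sSup_mul]; exact iSup_range

theorem mul_bot (a : A) : a * (⊥ : A) = ⊥ := by
  have := mul_sSup a (∅ : Set A); simpa using this

theorem bot_mul (a : A) : (⊥ : A) * a = ⊥ := by
  have := sSup_mul (∅ : Set A) a; simpa using this

end UQuantale

structure QMod (A : Type u) [UQuantale A] : Type (max u (v + 1)) where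
  carrier : Type v
  [latt : CompleteLattice carrier]
  act : carrier → A → carrier
  act_one : ∀ m, act m 1 = m
  act_mul : ∀ m a b, act m (a * b) = act (act m a) b
  sSup_act : ∀ (s : Set carrier) (a : A), act (sSup s) a = ⨆ m ∈ s, act m a
  act_sSup : ∀ (m : carrier) (s : Set A), act m (sSup s) = ⨆ a ∈ s, act m a

attribute [instance] QMod.latt

namespace QMod

variable {A : Type u} [UQuantale A]

def IsHom (M N : QMod.{u, v} A) (f : M.carrier → N.carrier) : Prop :=
  (∀ s : Set M.carrier, f (sSup s) = ⨆ m ∈ s, f m) ∧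
  (∀ m a, f (M.act m a) = N.act (f m) a)

theorem isHom_id (M : QMod.{u, v} A) : IsHom M M id :=
  ⟨fun s => by simp [sSup_eq_iSup], fun _ _ => rfl⟩

theorem isHom_comp {M N P : QMod.{u, v} A} {f : M.carrier → N.carrier}
    {g : N.carrier → P.carrier} (hf : IsHom M N f) (hg : IsHom N P g) :
    IsHom M P (g ∘ f) := by
  constructor
  · intro s
    show g (f (sSup s)) = _
    rw [hf.1 s, ← sSup_image, hg.1, iSup_image]
    rfl
  · intro m a
    show g (f (M.act m a)) = _
    rw [hf.2, hg.2]
    rfl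

instance : Category.{v} (QMod.{u, v} A) where
  Hom M N := { f : M.carrier → N.carrier // IsHom M N f }
  id M := ⟨id, isHom_id M⟩
  comp f g := ⟨g.1 ∘ f.1, isHom_comp f.2 g.2⟩
  id_comp _ := Subtype.ext rfl
  comp_id _ := Subtype.ext rfl
  assoc _ _ _ := Subtype.ext rfl

theorem iSup_act (M : QMod.{u, v} A) {ι : Sort w} (g : ι → M.carrier) (a : A) :
    M.act (⨆ i, g i) a = ⨆ i, M.act (g i) a := by
  rw [iSup, M.sSup_act]; exact iSup_range

theorem act_iSup (M : QMod.{u, v} A) (m : M.carrier) {ι : Sort w} (g : ι → A) :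
    M.act m (⨆ i, g i) = ⨆ i, M.act m (g i) := by
  rw [iSup, M.act_sSup]; exact iSup_range

theorem hom_iSup {M N : QMod.{u, v} A} (f : M ⟶ N) {ι : Sort w} (g : ι → M.carrier) :
    f.1 (⨆ i, g i) = ⨆ i, f.1 (g i) := by
  rw [iSup, f.2.1, iSup_range]

/-- The pointwise supremum of a set of module morphisms is a module morphism. -/
theorem isHom_biSup {M N : QMod.{u, v} A} (s : Set (M ⟶ N)) :
    IsHom M N (fun m => ⨆ f ∈ s, f.1 m) := by
  constructor
  · intro t
    calc (⨆ f ∈ s, f.1 (sSup t)) = ⨆ f ∈ s, ⨆ m ∈ t, f.1 m :=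
          iSup_congr fun f => iSup_congr fun _ => f.2.1 t
      _ = ⨆ m ∈ t, ⨆ f ∈ s, f.1 m := iSup₂_comm _
  · intro m a
    simp only [iSup_act]
    exact iSup_congr fun f => iSup_congr fun _ => f.2.2 m a

instance homSupSet (M N : QMod.{u, v} A) : SupSet (M ⟶ N) :=
  ⟨fun s => ⟨fun m => ⨆ f ∈ s, f.1 m, isHom_biSup s⟩⟩

instance homPartialOrder (M N : QMod.{u, v} A) : PartialOrder (M ⟶ N) :=
  inferInstanceAs (PartialOrder { f : M.carrier → N.carrier // IsHom M N f })

theorem hom_le_iff {M N : QMod.{u, v} A} {f g : M ⟶ N} : f ≤ g ↔ ∀ m, f.1 m ≤ g.1 m :=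
  Iff.rfl

instance homCompleteLattice (M N : QMod.{u, v} A) : CompleteLattice (M ⟶ N) :=
  completeLatticeOfSup _ (fun s => by
    constructor
    · intro f hf
      intro m
      exact le_iSup₂ (f := fun (f : M ⟶ N) (_ : f ∈ s) => f.1 m) f hf
    · intro g hg
      intro m
      exact iSup₂_le fun f hf => hg hf m)

theorem sSup_hom_apply {M N : QMod.{u, v} A} (s : Set (M ⟶ N)) (m : M.carrier) :
    (sSup s).1 m = ⨆ f ∈ s, f.1 m := rfl

theorem iSup_hom_apply {M N : QMod.{u, v} A} {ι : Sort w} (F : ι → (M ⟶ N)) (m : M.carrier) :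
    (⨆ i, F i).1 m = ⨆ i, (F i).1 m := by
  rw [iSup]
  show ⨆ f ∈ range F, f.1 m = _
  exact iSup_range

instance endMonoid (M : QMod.{u, v} A) : Monoid (M ⟶ M) where
  mul f g := g ≫ f
  one := 𝟙 M
  mul_assoc _ _ _ := Subtype.ext rfl
  one_mul _ := Subtype.ext rfl
  mul_one _ := Subtype.ext rfl

theorem end_mul_apply {M : QMod.{u, v} A} (f g : M ⟶ M) (m : M.carrier) :
    (f * g).1 m = f.1 (g.1 m) := rfl

/-- The endomorphism quantale `Hom_A(M,M)` of a right `A`-module `M`: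
multiplication is composition, the unit is the identity, suprema are pointwise. -/
instance endQuantale (M : QMod.{u, v} A) : UQuantale (M ⟶ M) :=
  { homCompleteLattice M M, endMonoid M with
    mul_sSup := fun a s => by
      apply Subtype.ext
      funext m
      show a.1 ((sSup s).1 m) = (⨆ b ∈ s, a * b).1 m
      rw [sSup_hom_apply]
      simp only [hom_iSup, iSup_hom_apply]
      rfl
    sSup_mul := fun s b => by
      apply Subtype.ext
      funext m
      show (sSup s).1 (b.1 m) = (⨆ a ∈ s, a * b).1 m
      rw [sSup_hom_apply]
      simp only [iSup_hom_apply]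
      rfl }

/-- `Q` is a generator of the category of right `A`-modules:
the hom functor out of `Q` is faithful. -/
def IsGenerator {A : Type u} [UQuantale A] (Q : QMod.{u, v} A) : Prop :=
  ∀ {M N : QMod.{u, v} A} (f g : M ⟶ N), (∀ h : Q ⟶ M, h ≫ f = h ≫ g) → f = g

/-- `Q` is projective: the hom functor out of `Q` sends epimorphisms to surjections. -/
def IsProjective {A : Type u} [UQuantale A] (Q : QMod.{u, v} A) : Prop :=
  ∀ {M N : QMod.{u, v} A} (p : M ⟶ N), Epi p → ∀ h : Q ⟶ N, ∃ k : Q ⟶ M, k ≫ p = h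

end QMod

def MoritaEquivalent (A B : Type u) [UQuantale A] [UQuantale B] : Prop :=
  Nonempty (QMod.{u, u} A ≌ QMod.{u, u} B)

def IsQuantaleIso {A : Type u} {B : Type v} [UQuantale A] [UQuantale B] (f : A → B) : Prop :=
  Function.Bijective f ∧ (∀ s : Set A, f (sSup s) = ⨆ a ∈ s, f a) ∧
    f 1 = 1 ∧ ∀ a a' : A, f (a * a') = f a * f a'

/-!
STATEMENT 8: Two quantales `A` and `B` are Morita equivalent iff there is a
projective generator `Q` of the category of right `A`-modules such that `B` is
isomorphic, as a quantale, to the endomorphism quantale `Hom_A(Q,Q)`.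
-/
namespace UQuantale

variable {A : Type u} [UQuantale A]

theorem mul_sup' (a b c : A) : a * (b ⊔ c) = a * b ⊔ a * c := by
  have := mul_sSup a {b, c}
  rw [sSup_pair, iSup_pair] at this
  exact this

theorem sup_mul' (a b c : A) : (a ⊔ b) * c = a * c ⊔ b * c := by
  have := sSup_mul {a, b} c
  rw [sSup_pair, iSup_pair] at this
  exact this

theorem mul_mono_left {a b : A} (h : a ≤ b) (c : A) : a * c ≤ b * c := by
  have : (a ⊔ b) * c = a * c ⊔ b * c := sup_mul' a b c
  rw [sup_eq_right.2 h] at this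
  exact le_sup_left.trans_eq this.symm

theorem mul_mono_right (c : A) {a b : A} (h : a ≤ b) : c * a ≤ c * b := by
  have : c * (a ⊔ b) = c * a ⊔ c * b := mul_sup' c a b
  rw [sup_eq_right.2 h] at this
  exact le_sup_left.trans_eq this.symm

end UQuantale

namespace QMod

variable {A : Type u} [UQuantale A]

theorem hom_ext {M N : QMod.{u, v} A} {f g : M ⟶ N} (h : ∀ m, f.1 m = g.1 m) : f = g :=
  Subtype.ext (funext h)

theorem comp_val {M N P : QMod.{u, v} A} (f : M ⟶ N) (g : N ⟶ P) (m : M.carrier) :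
    (f ≫ g).1 m = g.1 (f.1 m) := rfl

theorem id_val (M : QMod.{u, v} A) (m : M.carrier) : (𝟙 M : M ⟶ M).1 m = m := rfl

theorem act_bot_left (M : QMod.{u, v} A) (a : A) : M.act ⊥ a = ⊥ := by
  have := M.sSup_act ∅ a; simpa using this

theorem act_bot_right (M : QMod.{u, v} A) (m : M.carrier) : M.act m ⊥ = ⊥ := by
  have := M.act_sSup m ∅; simpa using this

theorem act_sup_left (M : QMod.{u, v} A) (m m' : M.carrier) (a : A) :
    M.act (m ⊔ m') a = M.act m a ⊔ M.act m' a := by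
  have := M.sSup_act {m, m'} a
  rw [sSup_pair, iSup_pair] at this
  exact this

theorem act_sup_right (M : QMod.{u, v} A) (m : M.carrier) (a b : A) :
    M.act m (a ⊔ b) = M.act m a ⊔ M.act m b := by
  have := M.act_sSup m {a, b}
  rw [sSup_pair, iSup_pair] at this
  exact this

theorem act_mono_left (M : QMod.{u, v} A) {m m' : M.carrier} (h : m ≤ m') (a : A) :
    M.act m a ≤ M.act m' a := by
  have := act_sup_left M m m' a
  rw [sup_eq_right.2 h] at this
  exact le_sup_left.trans_eq this.symm

theorem act_mono_right (M : QMod.{u, v} A) (m : M.carrier) {a b : A} (h : a ≤ b) :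
    M.act m a ≤ M.act m b := by
  have := act_sup_right M m a b
  rw [sup_eq_right.2 h] at this
  exact le_sup_left.trans_eq this.symm

theorem hom_sup {M N : QMod.{u, v} A} (f : M ⟶ N) (m m' : M.carrier) :
    f.1 (m ⊔ m') = f.1 m ⊔ f.1 m' := by
  have := f.2.1 {m, m'}
  rw [sSup_pair, iSup_pair] at this
  exact this

theorem hom_mono {M N : QMod.{u, v} A} (f : M ⟶ N) : Monotone f.1 := by
  intro m m' h
  have := hom_sup f m m'
  rw [sup_eq_right.2 h] at this
  exact le_sup_left.trans_eq this.symm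

theorem hom_bot {M N : QMod.{u, v} A} (f : M ⟶ N) : f.1 ⊥ = ⊥ := by
  have := f.2.1 ∅; simpa using this

theorem iSup₂_hom_apply {M N : QMod.{u, v} A} {ι : Sort w} {κ : ι → Sort w'}
    (F : ∀ i, κ i → (M ⟶ N)) (m : M.carrier) :
    (⨆ i, ⨆ j, F i j).1 m = ⨆ i, ⨆ j, (F i j).1 m := by
  rw [iSup_hom_apply]
  exact iSup_congr fun i => iSup_hom_apply _ _

theorem hom_iSup₂ {M N : QMod.{u, v} A} (f : M ⟶ N) {ι : Sort w} {κ : ι → Sort w'}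
    (g : ∀ i, κ i → M.carrier) :
    f.1 (⨆ i, ⨆ j, g i j) = ⨆ i, ⨆ j, f.1 (g i j) := by
  rw [hom_iSup]
  exact iSup_congr fun i => hom_iSup _ _

/-- The bottom morphism is the constant-`⊥` map. -/
theorem bot_hom_val (M N : QMod.{u, v} A) (m : M.carrier) : (⊥ : M ⟶ N).1 m = ⊥ := by
  apply le_antisymm _ bot_le
  have h : (⊥ : M ⟶ N) ≤ ⟨fun _ => ⊥, ⟨fun s => by simp, fun m a => (act_bot_left N a).symm⟩⟩ :=
    bot_le
  exact h m

/-- A bijective module morphism is an isomorphism. -/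
noncomputable def isoOfBijective {M N : QMod.{u, v} A} (f : M ⟶ N)
    (hf : Function.Bijective f.1) : M ≅ N := by
  choose g hg using fun n => (hf.2 n)
  have hgf : ∀ m, g (f.1 m) = m := fun m => hf.1 (by rw [hg])
  refine ⟨f, ⟨g, ?_, ?_⟩, ?_, ?_⟩
  · intro s
    apply hf.1
    rw [hg, hom_iSup₂, sSup_eq_iSup]
    exact iSup_congr fun n => iSup_congr fun _ => (hg n).symm
  · intro n a
    apply hf.1
    rw [hg, f.2.2, hg]
  · exact hom_ext fun m => hgf m
  · exact hom_ext fun n => hg n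

theorem epi_of_surjective {M N : QMod.{u, v} A} {p : M ⟶ N} (hp : Function.Surjective p.1) :
    Epi p := by
  constructor
  intro Z u v huv
  apply hom_ext
  intro n
  obtain ⟨m, rfl⟩ := hp n
  exact congrFun (congrArg Subtype.val huv) m

end QMod
namespace QMod

open OrderDual

variable {A : Type u} [UQuantale A]

/-- Residuation in a quantale. -/
def dact (α a : A) : A := sSup {β | a * β ≤ α}

theorem le_dact_iff {β α a : A} : β ≤ dact α a ↔ a * β ≤ α := by
  constructor
  · intro h
    have h2 : a * β ≤ a * dact α a := UQuantale.mul_mono_right a h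
    refine h2.trans ?_
    rw [dact, UQuantale.mul_sSup]
    exact iSup₂_le fun γ hγ => hγ
  · intro h
    exact le_sSup h

theorem dact_le_iff {α a : A} {c : Aᵒᵈ} :
    toDual (dact α a) ≤ c ↔ a * ofDual c ≤ α := by
  rw [toDual_le, le_dact_iff]

/-- The dualizing right `A`-module `Aᵒᵈ`. -/
abbrev dmod (A : Type u) [UQuantale A] : QMod.{u, u} A where
  carrier := Aᵒᵈ
  act α a := toDual (dact (ofDual α) a)
  act_one α := by
    apply eq_of_forall_ge_iff
    intro c
    rw [dact_le_iff, one_mul]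
    exact ofDual_le_ofDual
  act_mul α a b := by
    apply eq_of_forall_ge_iff
    intro c
    rw [dact_le_iff, dact_le_iff, ofDual_toDual, le_dact_iff, ← mul_assoc]
  sSup_act s a := by
    apply eq_of_forall_ge_iff
    intro c
    rw [dact_le_iff, iSup₂_le_iff, ← le_toDual, sSup_le_iff]
    refine forall₂_congr fun m _ => ?_
    rw [dact_le_iff, le_toDual]
  act_sSup α s := by
    apply eq_of_forall_ge_iff
    intro c
    rw [dact_le_iff, UQuantale.sSup_mul, iSup₂_le_iff, iSup₂_le_iff]
    exact forall₂_congr fun a _ => dact_le_iff.symm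

theorem dmod_act_le_iff {α c : Aᵒᵈ} {a : A} :
    (dmod A).act α a ≤ c ↔ a * ofDual c ≤ ofDual α := dact_le_iff

def residFun (M : QMod.{u, u} A) (x : M.carrier) (n : M.carrier) : A :=
  sSup {a | M.act n a ≤ x}

theorem le_residFun_iff {M : QMod.{u, u} A} {x n : M.carrier} {b : A} :
    b ≤ residFun M x n ↔ M.act n b ≤ x := by
  constructor
  · intro h
    have h2 : M.act n b ≤ M.act n (residFun M x n) := act_mono_right M n h
    refine h2.trans ?_
    rw [residFun, M.act_sSup]
    exact iSup₂_le fun a ha => ha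
  · intro h
    exact le_sSup h

theorem residFun_le_iff {M : QMod.{u, u} A} {x n : M.carrier} {c : Aᵒᵈ} :
    toDual (residFun M x n) ≤ c ↔ M.act n (ofDual c) ≤ x := by
  rw [toDual_le, le_residFun_iff]

/-- For `x` in a module `M`, the morphism `n ↦ max {a | n · a ≤ x}` into the
dualizing module. -/
def resid (M : QMod.{u, u} A) (x : M.carrier) : M ⟶ dmod A := by
  refine ⟨fun n => (toDual (residFun M x n) : Aᵒᵈ), ?_, ?_⟩
  · intro s
    show (toDual (residFun M x (sSup s)) : Aᵒᵈ) = ⨆ n ∈ s, (toDual (residFun M x n) : Aᵒᵈ)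
    apply eq_of_forall_ge_iff
    intro c
    rw [residFun_le_iff, iSup₂_le_iff, M.sSup_act, iSup₂_le_iff]
    exact forall₂_congr fun n _ => residFun_le_iff.symm
  · intro n a
    show (toDual (residFun M x (M.act n a)) : Aᵒᵈ) = (dmod A).act ((toDual (residFun M x n) : Aᵒᵈ)) a
    apply eq_of_forall_ge_iff
    intro c
    rw [residFun_le_iff, dmod_act_le_iff, ofDual_toDual, le_residFun_iff, M.act_mul]

theorem resid_val (M : QMod.{u, u} A) (x n : M.carrier) :
    (resid M x).1 n = toDual (residFun M x n) := rfl

theorem resid_injective (M : QMod.{u, u} A) : Function.Injective (resid M) := by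
  have key : ∀ z w : M.carrier, resid M z = resid M w → z ≤ w := by
    intro z w h
    have h1 : (1 : A) ≤ residFun M z z := le_residFun_iff.2 (by rw [M.act_one])
    have h2 : toDual (residFun M z z) = toDual (residFun M w z) := by
      rw [← resid_val, ← resid_val, h]
    rw [toDual.injective.eq_iff] at h2
    rw [h2] at h1
    have := le_residFun_iff.1 h1
    rwa [M.act_one] at this
  intro x y hxy
  exact le_antisymm (key x y hxy) (key y x hxy.symm)

/-- Right adjoint of a module morphism, as a function. -/
def radj {M N : QMod.{u, v} A} (p : M ⟶ N) (n : N.carrier) : M.carrier :=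
  sSup {m | p.1 m ≤ n}

theorem le_radj_iff {M N : QMod.{u, v} A} {p : M ⟶ N} {n : N.carrier} {m : M.carrier} :
    m ≤ radj p n ↔ p.1 m ≤ n := by
  constructor
  · intro h
    have h2 : p.1 m ≤ p.1 (radj p n) := hom_mono p h
    refine h2.trans ?_
    rw [radj, p.2.1]
    exact iSup₂_le fun m' hm' => hm'
  · intro h
    exact le_sSup h

theorem surjective_of_epi {M N : QMod.{u, u} A} (p : M ⟶ N) (hp : Epi p) :
    Function.Surjective p.1 := by
  intro x
  refine ⟨radj p x, ?_⟩
  have hle : p.1 (radj p x) ≤ x := le_radj_iff.1 le_rfl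
  have hradj : radj p (p.1 (radj p x)) = radj p x := by
    apply le_antisymm
    · exact sSup_le fun m hm => le_sSup (le_trans hm hle)
    · exact le_radj_iff.2 le_rfl
  have hcomp : p ≫ resid N x = p ≫ resid N (p.1 (radj p x)) := by
    apply hom_ext
    intro m
    rw [comp_val, comp_val, resid_val, resid_val]
    apply eq_of_forall_ge_iff
    intro c
    rw [residFun_le_iff, residFun_le_iff, ← p.2.2, ← le_radj_iff, ← le_radj_iff, hradj]
  have h2 := resid_injective N (hp.1 _ _ hcomp)
  exact h2.symm

end QMod
namespace QMod

variable {A : Type u} [UQuantale A]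

/-- Copower: the `ι`-indexed coproduct (= product) of copies of `N`. -/
abbrev copow (ι : Type u) (N : QMod.{u, u} A) : QMod.{u, u} A where
  carrier := ι → N.carrier
  act c a := fun i => N.act (c i) a
  act_one c := funext fun i => N.act_one _
  act_mul c a b := funext fun i => N.act_mul _ _ _
  sSup_act s a := funext fun i => by
    simp only [iSup_apply]
    rw [sSup_apply, iSup_act]
    exact iSup_subtype'' s fun c => N.act (c i) a
  act_sSup c s := funext fun i => by
    simp only [iSup_apply]
    rw [N.act_sSup]

theorem copow_iSup_apply {ι : Type u} {N : QMod.{u, u} A} {κ : Sort w}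
    (f : κ → (copow ι N).carrier) (i : ι) :
    (⨆ k, f k) i = ⨆ k, f k i := iSup_apply

def copowProj (ι : Type u) (N : QMod.{u, u} A) (i : ι) : copow ι N ⟶ N := by
  refine ⟨fun c => c i, ?_, fun m a => rfl⟩
  intro s
  simp only [iSup_apply]
  rw [sSup_apply]
  exact iSup_subtype'' s fun c => c i

noncomputable def copowInj (ι : Type u) (N : QMod.{u, u} A) (i : ι) : N ⟶ copow ι N := by
  classical
  refine ⟨fun n j => if j = i then n else ⊥, ?_, ?_⟩
  · intro s
    funext j
    show _ = (⨆ n ∈ s, (fun j => if j = i then n else ⊥ : (copow ι N).carrier)) j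
    simp only [copow_iSup_apply]
    by_cases h : j = i
    · subst h
      simp [sSup_eq_iSup]
    · simp [h]
  · intro n a
    funext j
    show (if j = i then N.act n a else ⊥) = N.act (if j = i then n else ⊥) a
    by_cases h : j = i
    · simp only [if_pos h]
    · simp only [if_neg h, act_bot_left]

theorem iSup_ite_bot {ι : Sort w} {β : Type v'} {α : Type v} [CompleteLattice α]
    [CompleteLattice β] (F : ι → β → α) (hbot : ∀ i, F i ⊥ = ⊥)
    (i₀ : ι) (n : β) [∀ i : ι, Decidable (i = i₀)] :
    (⨆ i, F i (if i = i₀ then n else ⊥)) = F i₀ n := by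
  apply le_antisymm
  · refine iSup_le fun i => ?_
    by_cases h : i = i₀
    · subst h; simp only [if_pos rfl]; exact le_rfl
    · simp only [if_neg h, hbot]; exact bot_le
  · have := le_iSup (fun i => F i (if i = i₀ then n else ⊥)) i₀
    simpa using this

/-- The regular right `A`-module. -/
abbrev regMod (A : Type u) [UQuantale A] : QMod.{u, u} A where
  carrier := A
  act a b := a * b
  act_one := mul_one
  act_mul m a b := (mul_assoc m a b).symm
  sSup_act s a := UQuantale.sSup_mul s a
  act_sSup m s := UQuantale.mul_sSup m s

/-- The canonical morphism from the free module on the underlying set of `Q` to `Q`. -/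
def freeEps (Q : QMod.{u, u} A) : copow Q.carrier (regMod A) ⟶ Q := by
  refine ⟨fun c => ⨆ x, Q.act x (c x), ?_, ?_⟩
  · intro s
    show (⨆ x, Q.act x (sSup s x)) = _
    calc (⨆ x, Q.act x (sSup s x)) = ⨆ x, ⨆ c : ↥s, Q.act x (c.1 x) := by
          refine iSup_congr fun x => ?_
          rw [sSup_apply, act_iSup]
      _ = ⨆ c : ↥s, ⨆ x, Q.act x (c.1 x) := iSup_comm
      _ = ⨆ c ∈ s, ⨆ x, Q.act x (c x) := iSup_subtype'' s fun c => ⨆ x, Q.act x (c x)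
  · intro c a
    show (⨆ x, Q.act x ((regMod A).act (c x) a)) = Q.act (⨆ x, Q.act x (c x)) a
    rw [iSup_act]
    exact iSup_congr fun x => Q.act_mul x (c x) a

theorem freeEps_surjective (Q : QMod.{u, u} A) : Function.Surjective (freeEps Q).1 := by
  classical
  intro q
  refine ⟨(copowInj Q.carrier (regMod A) q).1 (show (regMod A).carrier from (1 : A)), ?_⟩
  show (⨆ x, Q.act x (if x = q then (1 : A) else ⊥)) = q
  rw [iSup_ite_bot (F := fun x b => Q.act x b) (fun i => act_bot_right Q i) q 1]
  exact Q.act_one q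

/-- Projectivity gives an (infinitary) dual basis for `Q`. -/
theorem exists_dualBasis {Q : QMod.{u, u} A} (hQ : IsProjective Q) :
    ∃ σ : Q.carrier → (Q ⟶ regMod A), ∀ q, (⨆ x, Q.act x ((σ x).1 q)) = q := by
  obtain ⟨s, hs⟩ := hQ (freeEps Q) (epi_of_surjective (freeEps_surjective Q)) (𝟙 Q)
  refine ⟨fun x => s ≫ copowProj _ _ x, fun q => ?_⟩
  exact congrFun (congrArg Subtype.val hs) q

/-- The canonical morphism `⨁_{Hom(Q,M)} Q ⟶ M`. -/
def canEps (Q M : QMod.{u, u} A) : copow (Q ⟶ M) Q ⟶ M := by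
  refine ⟨fun c => ⨆ h : Q ⟶ M, h.1 (c h), ?_, ?_⟩
  · intro s
    show (⨆ h : Q ⟶ M, h.1 (sSup s h)) = _
    calc (⨆ h : Q ⟶ M, h.1 (sSup s h)) = ⨆ h : Q ⟶ M, ⨆ c : ↥s, h.1 (c.1 h) := by
          refine iSup_congr fun h => ?_
          rw [sSup_apply, hom_iSup]
      _ = ⨆ c : ↥s, ⨆ h : Q ⟶ M, h.1 (c.1 h) := iSup_comm
      _ = ⨆ c ∈ s, ⨆ h : Q ⟶ M, h.1 (c h) := iSup_subtype'' s fun c => ⨆ h : Q ⟶ M, h.1 (c h)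
  · intro c a
    show (⨆ h : Q ⟶ M, h.1 (Q.act (c h) a)) = M.act (⨆ h : Q ⟶ M, h.1 (c h)) a
    rw [iSup_act]
    exact iSup_congr fun h => h.2.2 (c h) a

theorem canEps_epi {Q : QMod.{u, u} A} (hQ : IsGenerator Q) (M : QMod.{u, u} A) :
    Epi (canEps Q M) := by
  classical
  constructor
  intro Z u v huv
  refine hQ u v fun h => ?_
  apply hom_ext
  intro n
  have h1 := congrFun (congrArg Subtype.val huv) ((copowInj (Q ⟶ M) Q h).1 n)
  have h2 : (canEps Q M).1 ((copowInj (Q ⟶ M) Q h).1 n) = h.1 n := by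
    show (⨆ h' : Q ⟶ M, h'.1 (if h' = h then n else ⊥)) = h.1 n
    rw [iSup_ite_bot (F := fun (h' : Q ⟶ M) m => h'.1 m) (fun h' => hom_bot h') h n]
  show u.1 (h.1 n) = v.1 (h.1 n)
  rw [← h2]
  exact h1

/-- The generator property gives a trace decomposition of the unit. -/
theorem exists_trace {Q : QMod.{u, u} A} (hQ : IsGenerator Q) :
    ∃ c : (Q ⟶ regMod A) → Q.carrier,
      (⨆ h : Q ⟶ regMod A, (h.1 (c h) : A)) = (1 : A) := by
  obtain ⟨c, hc⟩ := surjective_of_epi (canEps Q (regMod A)) (canEps_epi hQ _)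
      (show (regMod A).carrier from (1 : A))
  exact ⟨c, hc⟩

end QMod
namespace QMod

variable {A : Type u} [UQuantale A]

theorem act_iSup₂ (M : QMod.{u, v} A) (m : M.carrier) {ι : Sort w} {κ : ι → Sort w'}
    (g : ∀ i, κ i → A) :
    M.act m (⨆ i, ⨆ j, g i j) = ⨆ i, ⨆ j, M.act m (g i j) := by
  rw [act_iSup]
  exact iSup_congr fun i => act_iSup M m _

theorem iSup₂_act (M : QMod.{u, v} A) {ι : Sort w} {κ : ι → Sort w'}
    (g : ∀ i, κ i → M.carrier) (a : A) :
    M.act (⨆ i, ⨆ j, g i j) a = ⨆ i, ⨆ j, M.act (g i j) a := by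
  rw [iSup_act]
  exact iSup_congr fun i => iSup_act M _ a

theorem mul_iSup₂ {ι : Sort w} {κ : ι → Sort w'} (a : A) (g : ∀ i, κ i → A) :
    a * (⨆ i, ⨆ j, g i j) = ⨆ i, ⨆ j, a * g i j := by
  rw [UQuantale.mul_iSup]
  exact iSup_congr fun i => UQuantale.mul_iSup a _

/-- Identity coercions in and out of the regular module. -/
abbrev toA (x : (regMod A).carrier) : A := x

abbrev ofA (x : A) : (regMod A).carrier := x

variable (Q : QMod.{u, u} A)

/-- `Hom_A(Q, M)` as a right module over the endomorphism quantale of `Q`. -/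
abbrev Gobj (M : QMod.{u, u} A) : QMod.{u, u} (Q ⟶ Q) where
  carrier := Q ⟶ M
  act h e := e ≫ h
  act_one h := Category.id_comp h
  act_mul h e e' := Subtype.ext rfl
  sSup_act s e := by
    apply hom_ext
    intro q
    rw [comp_val, sSup_hom_apply, iSup₂_hom_apply]
    rfl
  act_sSup h s := by
    apply hom_ext
    intro q
    rw [comp_val, sSup_hom_apply, hom_iSup₂ h, iSup₂_hom_apply]
    rfl

theorem Gobj_act {M : QMod.{u, u} A} (h : Q ⟶ M) (e : Q ⟶ Q) :
    (Gobj Q M).act h e = e ≫ h := rfl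

def Gmap {M N : QMod.{u, u} A} (φ : M ⟶ N) : Gobj Q M ⟶ Gobj Q N := by
  refine ⟨fun h => h ≫ φ, ?_, fun h e => Subtype.ext rfl⟩
  intro s
  show (sSup s : Q ⟶ M) ≫ φ = ⨆ h ∈ s, h ≫ φ
  apply hom_ext
  intro q
  rw [comp_val, sSup_hom_apply, hom_iSup₂ φ, iSup₂_hom_apply]
  rfl

/-- The functor `Hom_A(Q, -) : Mod_A → Mod_{End(Q)}`. -/
def GFunctor : QMod.{u, u} A ⥤ QMod.{u, u} (Q ⟶ Q) where
  obj := Gobj Q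
  map := Gmap Q
  map_id M := hom_ext fun h => Category.comp_id h
  map_comp φ ψ := hom_ext fun h => (Category.assoc h φ ψ).symm

/-- The dual module `Q* = Hom_A(Q, A)` as a right `End(Q)`-module. -/
abbrev QStar : QMod.{u, u} (Q ⟶ Q) := Gobj Q (regMod A)

theorem QStar_act (ξ : Q ⟶ regMod A) (e : Q ⟶ Q) :
    (QStar Q).act ξ e = e ≫ ξ := rfl

/-- Left action of `A` on `Q*`. -/
def lact (a : A) (ξ : Q ⟶ regMod A) : Q ⟶ regMod A := by
  refine ⟨fun q => ofA (a * toA (ξ.1 q)), ?_, ?_⟩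
  · intro s
    show ofA (a * toA (ξ.1 (sSup s))) = ⨆ q ∈ s, ofA (a * toA (ξ.1 q))
    rw [ξ.2.1 s]
    exact mul_iSup₂ a _
  · intro m b
    show ofA (a * toA (ξ.1 (Q.act m b))) = (regMod A).act (ofA (a * toA (ξ.1 m))) b
    rw [ξ.2.2 m b]
    exact (mul_assoc a _ b).symm

theorem lact_val (a : A) (ξ : Q ⟶ regMod A) (q : Q.carrier) :
    (lact Q a ξ).1 q = ofA (a * toA (ξ.1 q)) := rfl

theorem lact_one (ξ : Q ⟶ regMod A) : lact Q 1 ξ = ξ :=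
  hom_ext fun q => congrArg (ofA (A := A)) (one_mul (toA (ξ.1 q)))

theorem lact_mul (a b : A) (ξ : Q ⟶ regMod A) :
    lact Q (a * b) ξ = lact Q a (lact Q b ξ) :=
  hom_ext fun q => congrArg (ofA (A := A)) (mul_assoc a b (toA (ξ.1 q)))

theorem lact_comp (a : A) (e : Q ⟶ Q) (ξ : Q ⟶ regMod A) :
    lact Q a (e ≫ ξ) = e ≫ lact Q a ξ :=
  hom_ext fun q => rfl

theorem lact_sSup (a : A) (s : Set (Q ⟶ regMod A)) :
    lact Q a (sSup s) = ⨆ ξ ∈ s, lact Q a ξ := by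
  apply hom_ext
  intro q
  show ofA (a * toA ((sSup s).1 q)) = (⨆ ξ ∈ s, lact Q a ξ).1 q
  rw [sSup_hom_apply, iSup₂_hom_apply]
  exact mul_iSup₂ a _

theorem lact_iSup {ι : Sort w} (a : ι → A) (ξ : Q ⟶ regMod A) :
    lact Q (⨆ i, a i) ξ = ⨆ i, lact Q (a i) ξ := by
  apply hom_ext
  intro q
  show ofA ((⨆ i, a i) * toA (ξ.1 q)) = (⨆ i, lact Q (a i) ξ).1 q
  rw [iSup_hom_apply, UQuantale.iSup_mul]
  rfl

theorem lact_sSupA (s : Set A) (ξ : Q ⟶ regMod A) :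
    lact Q (sSup s) ξ = ⨆ a ∈ s, lact Q a ξ := by
  apply hom_ext
  intro q
  show ofA ((sSup s) * toA (ξ.1 q)) = (⨆ a ∈ s, lact Q a ξ).1 q
  rw [iSup₂_hom_apply, UQuantale.sSup_mul]
  rfl

/-- The action of `a : A` on an element of `Hom_E(Q*, X)`. -/
def Fact {X : QMod.{u, u} (Q ⟶ Q)} (Φ : QStar Q ⟶ X) (a : A) : QStar Q ⟶ X := by
  refine ⟨fun ξ => Φ.1 (lact Q a ξ), ?_, ?_⟩
  · intro s
    show Φ.1 (lact Q a (sSup s)) = ⨆ ξ ∈ s, Φ.1 (lact Q a ξ)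
    rw [lact_sSup, hom_iSup₂ Φ]
  · intro ξ e
    show Φ.1 (lact Q a ((QStar Q).act ξ e)) = X.act (Φ.1 (lact Q a ξ)) e
    rw [QStar_act, lact_comp, ← QStar_act, Φ.2.2]

theorem Fact_val {X : QMod.{u, u} (Q ⟶ Q)} (Φ : QStar Q ⟶ X) (a : A)
    (ξ : Q ⟶ regMod A) : (Fact Q Φ a).1 ξ = Φ.1 (lact Q a ξ) := rfl

/-- The functor `Hom_E(Q*, -) : Mod_{End(Q)} → Mod_A` on objects. -/
abbrev Fobj (X : QMod.{u, u} (Q ⟶ Q)) : QMod.{u, u} A where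
  carrier := QStar Q ⟶ X
  act Φ a := Fact Q Φ a
  act_one Φ := hom_ext fun ξ => by
    rw [Fact_val, lact_one]
  act_mul Φ a b := hom_ext fun ξ => by
    rw [Fact_val, Fact_val, Fact_val, lact_mul]
  sSup_act s a := by
    apply hom_ext
    intro ξ
    show (sSup s).1 (lact Q a ξ) = (⨆ Φ ∈ s, Fact Q Φ a).1 ξ
    rw [sSup_hom_apply, iSup₂_hom_apply]
    rfl
  act_sSup Φ s := by
    apply hom_ext
    intro ξ
    show Φ.1 (lact Q (sSup s) ξ) = (⨆ a ∈ s, Fact Q Φ a).1 ξ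
    rw [lact_sSupA, hom_iSup₂ Φ, iSup₂_hom_apply]
    rfl

theorem Fobj_act {X : QMod.{u, u} (Q ⟶ Q)} (Φ : QStar Q ⟶ X) (a : A)
    (ξ : Q ⟶ regMod A) :
    ((Fobj Q X).act Φ a).1 ξ = Φ.1 (lact Q a ξ) := rfl

def Fmap {X Y : QMod.{u, u} (Q ⟶ Q)} (u : X ⟶ Y) : Fobj Q X ⟶ Fobj Q Y := by
  refine ⟨fun Φ => Φ ≫ u, ?_, fun Φ a => Subtype.ext rfl⟩
  intro s
  show (sSup s : QStar Q ⟶ X) ≫ u = ⨆ Φ ∈ s, Φ ≫ u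
  apply hom_ext
  intro ξ
  rw [comp_val, sSup_hom_apply, hom_iSup₂ u, iSup₂_hom_apply]
  rfl

/-- The functor `Hom_E(Q*, -) : Mod_{End(Q)} → Mod_A`. -/
def FFunctor : QMod.{u, u} (Q ⟶ Q) ⥤ QMod.{u, u} A where
  obj := Fobj Q
  map := Fmap Q
  map_id X := hom_ext fun Φ => Category.comp_id Φ
  map_comp u v := hom_ext fun Φ => (Category.assoc Φ u v).symm

/-- The endomorphism `y ↦ q ⬝ ξ(y)` of `Q`. -/
def eQ (q : Q.carrier) (ξ : Q ⟶ regMod A) : Q ⟶ Q := by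
  refine ⟨fun y => Q.act q (toA (ξ.1 y)), ?_, ?_⟩
  · intro s
    show Q.act q (toA (ξ.1 (sSup s))) = ⨆ y ∈ s, Q.act q (toA (ξ.1 y))
    rw [ξ.2.1 s]
    exact act_iSup₂ Q q _
  · intro y a
    show Q.act q (toA (ξ.1 (Q.act y a))) = Q.act (Q.act q (toA (ξ.1 y))) a
    rw [ξ.2.2 y a]
    exact Q.act_mul q _ a

theorem eQ_val (q : Q.carrier) (ξ : Q ⟶ regMod A) (y : Q.carrier) :
    (eQ Q q ξ).1 y = Q.act q (toA (ξ.1 y)) := rfl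

theorem eQ_act (q : Q.carrier) (a : A) (ξ : Q ⟶ regMod A) :
    eQ Q (Q.act q a) ξ = eQ Q q (lact Q a ξ) :=
  hom_ext fun y => by
    rw [eQ_val, eQ_val, ← Q.act_mul]
    rfl

theorem mul_eQ (e : Q ⟶ Q) (q : Q.carrier) (ξ : Q ⟶ regMod A) :
    e * eQ Q q ξ = eQ Q (e.1 q) ξ :=
  hom_ext fun y => e.2.2 q (toA (ξ.1 y))

theorem eQ_comp_hom (q : Q.carrier) (ξ : Q ⟶ regMod A) (σ : Q ⟶ regMod A) :
    eQ Q q ξ ≫ σ = lact Q (toA (σ.1 q)) ξ :=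
  hom_ext fun y => σ.2.2 q (toA (ξ.1 y))

theorem eQ_sSup (q : Q.carrier) (s : Set (Q ⟶ regMod A)) :
    eQ Q q (sSup s) = ⨆ ξ ∈ s, eQ Q q ξ := by
  apply hom_ext
  intro y
  show Q.act q (toA ((sSup s).1 y)) = (⨆ ξ ∈ s, eQ Q q ξ).1 y
  rw [sSup_hom_apply, iSup₂_hom_apply, act_iSup₂]
  rfl

theorem sSup_eQ (s : Set Q.carrier) (ξ : Q ⟶ regMod A) :
    eQ Q (sSup s) ξ = ⨆ q ∈ s, eQ Q q ξ := by
  apply hom_ext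
  intro y
  show Q.act (sSup s) (toA (ξ.1 y)) = (⨆ q ∈ s, eQ Q q ξ).1 y
  rw [iSup₂_hom_apply, Q.sSup_act]
  rfl

/-- Layers of the unit `M ⟶ Hom_E(Q*, Hom_A(Q, M))`. -/
def etaEl (M : QMod.{u, u} A) (m : M.carrier) (ξ : Q ⟶ regMod A) : Q ⟶ M := by
  refine ⟨fun q => M.act m (toA (ξ.1 q)), ?_, ?_⟩
  · intro s
    show M.act m (toA (ξ.1 (sSup s))) = ⨆ q ∈ s, M.act m (toA (ξ.1 q))
    rw [ξ.2.1 s]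
    exact act_iSup₂ M m _
  · intro q a
    show M.act m (toA (ξ.1 (Q.act q a))) = M.act (M.act m (toA (ξ.1 q))) a
    rw [ξ.2.2 q a]
    exact M.act_mul m _ a

def etaMid (M : QMod.{u, u} A) (m : M.carrier) : QStar Q ⟶ Gobj Q M := by
  refine ⟨fun ξ => etaEl Q M m ξ, ?_, ?_⟩
  · intro s
    show etaEl Q M m (sSup s) = ⨆ ξ ∈ s, etaEl Q M m ξ
    apply hom_ext
    intro q
    show M.act m (toA ((sSup s).1 q)) = (⨆ ξ ∈ s, etaEl Q M m ξ).1 q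
    rw [sSup_hom_apply, iSup₂_hom_apply, act_iSup₂]
    rfl
  · intro ξ e
    show etaEl Q M m ((QStar Q).act ξ e) = (Gobj Q M).act (etaEl Q M m ξ) e
    exact Subtype.ext rfl

def eta (M : QMod.{u, u} A) : M ⟶ Fobj Q (Gobj Q M) := by
  refine ⟨fun m => etaMid Q M m, ?_, ?_⟩
  · intro s
    show etaMid Q M (sSup s) = ⨆ m ∈ s, etaMid Q M m
    apply hom_ext
    intro ξ
    apply hom_ext
    intro q
    show M.act (sSup s) (toA (ξ.1 q)) = (((⨆ m ∈ s, etaMid Q M m).1 ξ) : Q ⟶ M).1 q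
    rw [iSup₂_hom_apply (F := fun m (_ : m ∈ s) => etaMid Q M m) ξ, iSup₂_hom_apply,
      M.sSup_act]
    rfl
  · intro m a
    show etaMid Q M (M.act m a) = (Fobj Q (Gobj Q M)).act (etaMid Q M m) a
    apply hom_ext
    intro ξ
    apply hom_ext
    intro q
    show M.act (M.act m a) (toA (ξ.1 q)) = ((etaMid Q M m).1 (lact Q a ξ)).1 q
    rw [← M.act_mul]
    rfl

theorem eta_val (M : QMod.{u, u} A) (m : M.carrier) (ξ : Q ⟶ regMod A) (q : Q.carrier) :
    (((eta Q M).1 m).1 ξ).1 q = M.act m (toA (ξ.1 q)) := rfl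

/-- Layers of the counit-side map `X ⟶ Hom_A(Q, Hom_E(Q*, X))`. -/
def thetaEl (X : QMod.{u, u} (Q ⟶ Q)) (x : X.carrier) (q : Q.carrier) :
    QStar Q ⟶ X := by
  refine ⟨fun ξ => X.act x (eQ Q q ξ), ?_, ?_⟩
  · intro s
    show X.act x (eQ Q q (sSup s)) = ⨆ ξ ∈ s, X.act x (eQ Q q ξ)
    rw [eQ_sSup, act_iSup₂ X]
  · intro ξ e
    show X.act x (eQ Q q ((QStar Q).act ξ e)) = X.act (X.act x (eQ Q q ξ)) e
    rw [← X.act_mul]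
    exact congrArg (X.act x) (hom_ext fun y => rfl)

def thetaMid (X : QMod.{u, u} (Q ⟶ Q)) (x : X.carrier) : Q ⟶ Fobj Q X := by
  refine ⟨fun q => thetaEl Q X x q, ?_, ?_⟩
  · intro s
    show thetaEl Q X x (sSup s) = ⨆ q ∈ s, thetaEl Q X x q
    apply hom_ext
    intro ξ
    show X.act x (eQ Q (sSup s) ξ) = (⨆ q ∈ s, thetaEl Q X x q).1 ξ
    rw [sSup_eQ, act_iSup₂ X, iSup₂_hom_apply]
    rfl
  · intro q a
    show thetaEl Q X x (Q.act q a) = (Fobj Q X).act (thetaEl Q X x q) a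
    apply hom_ext
    intro ξ
    show X.act x (eQ Q (Q.act q a) ξ) = X.act x (eQ Q q (lact Q a ξ))
    rw [eQ_act]

def theta (X : QMod.{u, u} (Q ⟶ Q)) : X ⟶ Gobj Q (Fobj Q X) := by
  refine ⟨fun x => thetaMid Q X x, ?_, ?_⟩
  · intro s
    show thetaMid Q X (sSup s) = ⨆ x ∈ s, thetaMid Q X x
    apply hom_ext
    intro q
    apply hom_ext
    intro ξ
    show X.act (sSup s) (eQ Q q ξ) = (((⨆ x ∈ s, thetaMid Q X x).1 q) : QStar Q ⟶ X).1 ξ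
    rw [iSup₂_hom_apply (F := fun x (_ : x ∈ s) => thetaMid Q X x) q, iSup₂_hom_apply,
      X.sSup_act]
    rfl
  · intro x e
    show thetaMid Q X (X.act x e) = (Gobj Q (Fobj Q X)).act (thetaMid Q X x) e
    apply hom_ext
    intro q
    apply hom_ext
    intro ξ
    show X.act (X.act x e) (eQ Q q ξ) = X.act x (eQ Q (e.1 q) ξ)
    rw [← X.act_mul, mul_eQ]

theorem theta_val (X : QMod.{u, u} (Q ⟶ Q)) (x : X.carrier) (q : Q.carrier)
    (ξ : Q ⟶ regMod A) :
    (((theta Q X).1 x).1 q).1 ξ = X.act x (eQ Q q ξ) := rfl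

end QMod
namespace QMod

variable {A : Type u} [UQuantale A] (Q : QMod.{u, u} A)

theorem theta_bijective (hproj : IsProjective Q) (X : QMod.{u, u} (Q ⟶ Q)) :
    Function.Bijective (theta Q X).1 := by
  obtain ⟨σ, hσ⟩ := exists_dualBasis hproj
  have hid : (1 : Q ⟶ Q) = ⨆ y, eQ Q y (σ y) := by
    apply hom_ext
    intro q
    rw [iSup_hom_apply]
    exact (hσ q).symm
  have expand : ∀ x : X.carrier, x = ⨆ y, X.act x (eQ Q y (σ y)) := by
    intro x
    conv_lhs => rw [← X.act_one x, hid, act_iSup X]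
  constructor
  · intro x x' h
    have hv : ∀ q ξ, X.act x (eQ Q q ξ) = X.act x' (eQ Q q ξ) := by
      intro q ξ
      have h1 := congrFun (congrArg Subtype.val h) q
      exact congrFun (congrArg Subtype.val h1) ξ
    rw [expand x, expand x']
    exact iSup_congr fun y => hv y (σ y)
  · intro k
    refine ⟨⨆ y, (k.1 y).1 (σ y), ?_⟩
    apply hom_ext
    intro q
    apply hom_ext
    intro ξ
    show X.act (⨆ y, (k.1 y).1 (σ y)) (eQ Q q ξ) = (k.1 q).1 ξ
    rw [iSup_act X]
    calc (⨆ y, X.act ((k.1 y).1 (σ y)) (eQ Q q ξ))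
        = ⨆ y, (k.1 y).1 ((QStar Q).act (σ y) (eQ Q q ξ)) :=
          iSup_congr fun y => ((k.1 y).2.2 (σ y) (eQ Q q ξ)).symm
      _ = ⨆ y, (k.1 y).1 (lact Q (toA ((σ y).1 q)) ξ) := by
          refine iSup_congr fun y => congrArg (fun t => (k.1 y).1 t) ?_
          rw [QStar_act, eQ_comp_hom]
      _ = ⨆ y, (k.1 (Q.act y (toA ((σ y).1 q)))).1 ξ :=
          iSup_congr fun y => congrArg (fun t => t.1 ξ) (k.2.2 y (toA ((σ y).1 q))).symm
      _ = (k.1 (⨆ y, Q.act y (toA ((σ y).1 q)))).1 ξ := by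
          rw [hom_iSup k, iSup_hom_apply]
      _ = (k.1 q).1 ξ := congrArg (fun t => (k.1 t).1 ξ) (hσ q)

theorem eta_bijective (hgen : IsGenerator Q) (M : QMod.{u, u} A) :
    Function.Bijective (eta Q M).1 := by
  obtain ⟨c, hc⟩ := exists_trace hgen
  have expand : ∀ m : M.carrier,
      m = ⨆ h : Q ⟶ regMod A, M.act m (toA (h.1 (c h))) := by
    intro m
    conv_lhs => rw [← M.act_one m, ← hc, act_iSup M]
  constructor
  · intro m m' h
    have hv : ∀ (ξ : Q ⟶ regMod A) (q : Q.carrier), M.act m (toA (ξ.1 q)) = M.act m' (toA (ξ.1 q)) := by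
      intro ξ q
      have h1 := congrFun (congrArg Subtype.val h) ξ
      exact congrFun (congrArg Subtype.val h1) q
    rw [expand m, expand m']
    exact iSup_congr fun h' => hv h' (c h')
  · intro Ψ
    refine ⟨⨆ h : Q ⟶ regMod A, (Ψ.1 h).1 (c h), ?_⟩
    apply hom_ext
    intro ξ
    apply hom_ext
    intro q
    show M.act (⨆ h : Q ⟶ regMod A, (Ψ.1 h).1 (c h)) (toA (ξ.1 q)) = (Ψ.1 ξ).1 q
    rw [iSup_act M]
    calc (⨆ h : Q ⟶ regMod A, M.act ((Ψ.1 h).1 (c h)) (toA (ξ.1 q)))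
        = ⨆ h : Q ⟶ regMod A, (Ψ.1 h).1 (Q.act (c h) (toA (ξ.1 q))) :=
          iSup_congr fun h => ((Ψ.1 h).2.2 (c h) (toA (ξ.1 q))).symm
      _ = ⨆ h : Q ⟶ regMod A, (Ψ.1 ((QStar Q).act h (eQ Q (c h) ξ))).1 q :=
          iSup_congr fun h => congrArg (fun t => t.1 q) (Ψ.2.2 h (eQ Q (c h) ξ)).symm
      _ = ⨆ h : Q ⟶ regMod A, (Ψ.1 (lact Q (toA (h.1 (c h))) ξ)).1 q := by
          refine iSup_congr fun h => congrArg (fun t => (Ψ.1 t).1 q) ?_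
          rw [QStar_act, eQ_comp_hom]
      _ = (Ψ.1 (⨆ h : Q ⟶ regMod A, lact Q (toA (h.1 (c h))) ξ)).1 q := by
          rw [hom_iSup Ψ, iSup_hom_apply]
      _ = (Ψ.1 (lact Q (⨆ h : Q ⟶ regMod A, toA (h.1 (c h))) ξ)).1 q := by
          rw [lact_iSup]
      _ = (Ψ.1 (lact Q 1 ξ)).1 q := by
          exact congrArg (fun t => (Ψ.1 (lact Q t ξ)).1 q) hc
      _ = (Ψ.1 ξ).1 q := by rw [lact_one]

theorem eta_natural {M N : QMod.{u, u} A} (φ : M ⟶ N) :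
    φ ≫ eta Q N = eta Q M ≫ Fmap Q (Gmap Q φ) := by
  apply hom_ext
  intro m
  apply hom_ext
  intro ξ
  apply hom_ext
  intro q
  show N.act (φ.1 m) (toA (ξ.1 q)) = φ.1 (M.act m (toA (ξ.1 q)))
  exact (φ.2.2 m _).symm

theorem theta_natural {X Y : QMod.{u, u} (Q ⟶ Q)} (u : X ⟶ Y) :
    u ≫ theta Q Y = theta Q X ≫ Gmap Q (Fmap Q u) := by
  apply hom_ext
  intro x
  apply hom_ext
  intro q
  apply hom_ext
  intro ξ
  show Y.act (u.1 x) (eQ Q q ξ) = u.1 (X.act x (eQ Q q ξ))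
  exact (u.2.2 x _).symm

/-- The Morita equivalence `Mod_A ≃ Mod_{End(Q)}` induced by a projective generator. -/
noncomputable def moritaCore (hgen : IsGenerator Q) (hproj : IsProjective Q) :
    QMod.{u, u} A ≌ QMod.{u, u} (Q ⟶ Q) :=
  CategoryTheory.Equivalence.mk (GFunctor Q) (FFunctor Q)
    (CategoryTheory.NatIso.ofComponents
      (fun M => isoOfBijective (eta Q M) (eta_bijective Q hgen M))
      (fun φ => eta_natural Q φ))
    ((CategoryTheory.NatIso.ofComponents
      (fun X => isoOfBijective (theta Q X) (theta_bijective Q hproj X))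
      (fun u => theta_natural Q u)).symm)

end QMod
theorem isQuantaleIso_inv {C : Type u} {D : Type v} [UQuantale C] [UQuantale D]
    {f : C → D} (hf : IsQuantaleIso f) :
    ∃ g : D → C, IsQuantaleIso g ∧ (∀ d, f (g d) = d) ∧ (∀ c, g (f c) = c) := by
  obtain ⟨⟨hinj, hsurj⟩, hsup, hone, hmul⟩ := hf
  choose g hfg using hsurj
  have hgf : ∀ c, g (f c) = c := fun c => hinj (by rw [hfg])
  refine ⟨g, ⟨⟨fun d d' h => by rw [← hfg d, ← hfg d', h], fun c => ⟨f c, hgf c⟩⟩,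
    ?_, ?_, ?_⟩, hfg, hgf⟩
  · intro s
    apply hinj
    rw [hfg]
    have h1 : (⨆ d ∈ s, g d) = sSup (g '' s) := (sSup_image).symm
    rw [h1, hsup, sSup_eq_iSup]
    rw [iSup_image]
    exact (iSup_congr fun d => iSup_congr fun _ => hfg d).symm
  · apply hinj
    rw [hfg, hone]
  · intro d d'
    apply hinj
    rw [hfg, hmul, hfg, hfg]

namespace QMod

section Restriction

variable {C D : Type u} [UQuantale C] [UQuantale D]

/-- Restriction of scalars along a quantale isomorphism. -/
def resObj (f : C → D) (hf : IsQuantaleIso f) (X : QMod.{u, u} D) : QMod.{u, u} C where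
  carrier := X.carrier
  act m c := X.act m (f c)
  act_one m := by
    show X.act m (f 1) = m
    rw [hf.2.2.1]
    exact X.act_one m
  act_mul m a b := by
    show X.act m (f (a * b)) = X.act (X.act m (f a)) (f b)
    rw [hf.2.2.2]
    exact X.act_mul m (f a) (f b)
  sSup_act s c := X.sSup_act s (f c)
  act_sSup m s := by
    show X.act m (f (sSup s)) = ⨆ c ∈ s, X.act m (f c)
    rw [hf.2.1 s]
    exact act_iSup₂ X m _

def resMap (f : C → D) (hf : IsQuantaleIso f) {X Y : QMod.{u, u} D} (u : X ⟶ Y) :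
    resObj f hf X ⟶ resObj f hf Y :=
  ⟨u.1, u.2.1, fun m c => u.2.2 m (f c)⟩

def resFunctor (f : C → D) (hf : IsQuantaleIso f) :
    QMod.{u, u} D ⥤ QMod.{u, u} C where
  obj := resObj f hf
  map := resMap f hf
  map_id X := Subtype.ext rfl
  map_comp u v := Subtype.ext rfl

variable (f : C → D) (hf : IsQuantaleIso f) (g : D → C) (hg : IsQuantaleIso g)
  (hfg : ∀ d, f (g d) = d) (hgf : ∀ c, g (f c) = c)

def resUnitComp (X : QMod.{u, u} D) : X ≅ resObj g hg (resObj f hf X) := by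
  refine ⟨⟨id, ?_, ?_⟩, ⟨id, ?_, ?_⟩, hom_ext fun m => rfl, hom_ext fun m => rfl⟩
  · intro s
    show sSup s = ⨆ m ∈ s, m
    exact sSup_eq_iSup
  · intro m d
    show X.act m d = X.act m (f (g d))
    rw [hfg d]
  · intro s
    show sSup s = ⨆ m ∈ s, m
    exact sSup_eq_iSup
  · intro m d
    show X.act m (f (g d)) = X.act m d
    rw [hfg d]

def resCounitComp (Y : QMod.{u, u} C) : resObj f hf (resObj g hg Y) ≅ Y := by
  refine ⟨⟨id, ?_, ?_⟩, ⟨id, ?_, ?_⟩, hom_ext fun m => rfl, hom_ext fun m => rfl⟩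
  · intro s
    show sSup s = ⨆ m ∈ s, m
    exact sSup_eq_iSup
  · intro m c
    show Y.act m (g (f c)) = Y.act m c
    rw [hgf c]
  · intro s
    show sSup s = ⨆ m ∈ s, m
    exact sSup_eq_iSup
  · intro m c
    show Y.act m c = Y.act m (g (f c))
    rw [hgf c]

/-- Restriction along a quantale isomorphism is an equivalence of module categories. -/
def resEquiv : QMod.{u, u} D ≌ QMod.{u, u} C :=
  CategoryTheory.Equivalence.mk (resFunctor f hf) (resFunctor g hg)
    (CategoryTheory.NatIso.ofComponents (fun X => resUnitComp f hf g hg hfg X)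
      (fun u => hom_ext fun m => rfl))
    (CategoryTheory.NatIso.ofComponents (fun Y => resCounitComp f hf g hg hgf Y)
      (fun u => hom_ext fun m => rfl))

end Restriction

/-- The backward direction of Morita's theorem. -/
theorem morita_of_projective_generator {A B : Type u} [UQuantale A] [UQuantale B]
    (Q : QMod.{u, u} A) (hgen : IsGenerator Q) (hproj : IsProjective Q)
    (f : B → (Q ⟶ Q)) (hf : IsQuantaleIso f) : MoritaEquivalent A B := by
  obtain ⟨g, hg, hfg, hgf⟩ := isQuantaleIso_inv hf
  exact ⟨(moritaCore Q hgen hproj).trans (resEquiv f hf g hg hfg hgf)⟩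

end QMod
namespace QMod

variable {C : Type u} [UQuantale C]

/-- The zero module. -/
def zmod (C : Type u) [UQuantale C] : QMod.{u, u} C where
  carrier := PUnit.{u + 1}
  act _ _ := PUnit.unit
  act_one _ := Subsingleton.elim _ _
  act_mul _ _ _ := Subsingleton.elim _ _
  sSup_act _ _ := Subsingleton.elim _ _
  act_sSup _ _ := Subsingleton.elim _ _

instance : Subsingleton (zmod C).carrier := inferInstanceAs (Subsingleton PUnit)

theorem hom_from_zmod_val {N : QMod.{u, u} C} (k : zmod C ⟶ N) (x : (zmod C).carrier) :
    k.1 x = ⊥ := by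
  have h1 : x = sSup (∅ : Set (zmod C).carrier) := Subsingleton.elim _ _
  rw [h1, k.2.1]
  simp

theorem subsingleton_hom_from_zmod (N : QMod.{u, u} C) : Subsingleton (zmod C ⟶ N) :=
  ⟨fun k k' => hom_ext fun x => by rw [hom_from_zmod_val, hom_from_zmod_val]⟩

theorem subsingleton_hom_to_zmod (M : QMod.{u, u} C) : Subsingleton (M ⟶ zmod C) :=
  ⟨fun k k' => hom_ext fun m => Subsingleton.elim _ _⟩

def toZmod (M : QMod.{u, u} C) : M ⟶ zmod C :=
  ⟨fun _ => PUnit.unit, fun s => Subsingleton.elim _ _, fun m a => Subsingleton.elim _ _⟩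

def fromZmod (N : QMod.{u, u} C) : zmod C ⟶ N := by
  refine ⟨fun _ => ⊥, ?_, fun m a => (act_bot_left N a).symm⟩
  intro s
  show (⊥ : N.carrier) = ⨆ m ∈ s, ⊥
  simp

theorem bot_eq_toZmod_comp (M N : QMod.{u, u} C) :
    (⊥ : M ⟶ N) = toZmod M ≫ fromZmod N :=
  hom_ext fun m => by rw [bot_hom_val]; rfl

/-- Binary biproduct of modules. -/
abbrev pmod (M N : QMod.{u, u} C) : QMod.{u, u} C where
  carrier := M.carrier × N.carrier
  act p a := (M.act p.1 a, N.act p.2 a)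
  act_one p := Prod.ext (M.act_one p.1) (N.act_one p.2)
  act_mul p a b := Prod.ext (M.act_mul p.1 a b) (N.act_mul p.2 a b)
  sSup_act s a := by
    apply Prod.ext
    · show M.act (sSup s).1 a = (⨆ p ∈ s, (M.act p.1 a, N.act p.2 a)).1
      simp only [Prod.fst_iSup]
      rw [Prod.fst_sSup, M.sSup_act, iSup_image]
    · show N.act (sSup s).2 a = (⨆ p ∈ s, (M.act p.1 a, N.act p.2 a)).2
      simp only [Prod.snd_iSup]
      rw [Prod.snd_sSup, N.sSup_act, iSup_image]
  act_sSup p s := by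
    apply Prod.ext
    · show M.act p.1 (sSup s) = (⨆ a ∈ s, (M.act p.1 a, N.act p.2 a)).1
      simp only [Prod.fst_iSup]
      rw [M.act_sSup]
    · show N.act p.2 (sSup s) = (⨆ a ∈ s, (M.act p.1 a, N.act p.2 a)).2
      simp only [Prod.snd_iSup]
      rw [N.act_sSup]

variable {M N P : QMod.{u, u} C}

def pfst (M N : QMod.{u, u} C) : pmod M N ⟶ M := by
  refine ⟨fun p => p.1, ?_, fun p a => rfl⟩
  intro s
  show (sSup s).1 = ⨆ p ∈ s, p.1
  rw [Prod.fst_sSup, sSup_image]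

def psnd (M N : QMod.{u, u} C) : pmod M N ⟶ N := by
  refine ⟨fun p => p.2, ?_, fun p a => rfl⟩
  intro s
  show (sSup s).2 = ⨆ p ∈ s, p.2
  rw [Prod.snd_sSup, sSup_image]

def pinl (M N : QMod.{u, u} C) : M ⟶ pmod M N := by
  refine ⟨fun m => (m, ⊥), ?_, ?_⟩
  · intro s
    apply Prod.ext
    · show sSup s = (⨆ m ∈ s, ((m, ⊥) : M.carrier × N.carrier)).1
      simp only [Prod.fst_iSup]
      exact sSup_eq_iSup
    · show (⊥ : N.carrier) = (⨆ m ∈ s, ((m, ⊥) : M.carrier × N.carrier)).2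
      simp only [Prod.snd_iSup]
      simp
  · intro m a
    exact Prod.ext rfl (act_bot_left N a).symm

def pinr (M N : QMod.{u, u} C) : N ⟶ pmod M N := by
  refine ⟨fun n => (⊥, n), ?_, ?_⟩
  · intro s
    apply Prod.ext
    · show (⊥ : M.carrier) = (⨆ n ∈ s, ((⊥, n) : M.carrier × N.carrier)).1
      simp only [Prod.fst_iSup]
      simp
    · show sSup s = (⨆ n ∈ s, ((⊥, n) : M.carrier × N.carrier)).2
      simp only [Prod.snd_iSup]
      exact sSup_eq_iSup
  · intro n a
    exact Prod.ext (act_bot_left M a).symm rfl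

def pcodiag (N : QMod.{u, u} C) : pmod N N ⟶ N := by
  refine ⟨fun p => p.1 ⊔ p.2, ?_, ?_⟩
  · intro s
    show (sSup s).1 ⊔ (sSup s).2 = ⨆ p ∈ s, p.1 ⊔ p.2
    rw [Prod.fst_sSup, Prod.snd_sSup, sSup_image, sSup_image, ← iSup_sup_eq]
    exact iSup_congr fun p => iSup_sup_eq.symm
  · intro p a
    show N.act p.1 a ⊔ N.act p.2 a = N.act (p.1 ⊔ p.2) a
    exact (act_sup_left N p.1 p.2 a).symm

def ppair (f : P ⟶ M) (g : P ⟶ N) : P ⟶ pmod M N := by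
  refine ⟨fun m => (f.1 m, g.1 m), ?_, ?_⟩
  · intro s
    apply Prod.ext
    · show f.1 (sSup s) = (⨆ m ∈ s, ((f.1 m, g.1 m) : M.carrier × N.carrier)).1
      simp only [Prod.fst_iSup]
      exact f.2.1 s
    · show g.1 (sSup s) = (⨆ m ∈ s, ((f.1 m, g.1 m) : M.carrier × N.carrier)).2
      simp only [Prod.snd_iSup]
      exact g.2.1 s
  · intro m a
    exact Prod.ext (f.2.2 m a) (g.2.2 m a)

def pcopair (f : M ⟶ P) (g : N ⟶ P) : pmod M N ⟶ P := by
  refine ⟨fun p => f.1 p.1 ⊔ g.1 p.2, ?_, ?_⟩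
  · intro s
    show f.1 (sSup s).1 ⊔ g.1 (sSup s).2 = ⨆ p ∈ s, f.1 p.1 ⊔ g.1 p.2
    rw [Prod.fst_sSup, Prod.snd_sSup, f.2.1, g.2.1, iSup_image, iSup_image,
      ← iSup_sup_eq]
    exact iSup_congr fun p => iSup_sup_eq.symm
  · intro p a
    show f.1 (M.act p.1 a) ⊔ g.1 (N.act p.2 a) = P.act (f.1 p.1 ⊔ g.1 p.2) a
    rw [f.2.2, g.2.2, act_sup_left]

theorem ppair_fst (f : P ⟶ M) (g : P ⟶ N) : ppair f g ≫ pfst M N = f :=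
  hom_ext fun m => rfl

theorem ppair_snd (f : P ⟶ M) (g : P ⟶ N) : ppair f g ≫ psnd M N = g :=
  hom_ext fun m => rfl

theorem comp_ppair {P' : QMod.{u, u} C} (w : P' ⟶ P) (f : P ⟶ M) (g : P ⟶ N) :
    w ≫ ppair f g = ppair (w ≫ f) (w ≫ g) :=
  hom_ext fun m => rfl

theorem pinl_pcopair (f : M ⟶ P) (g : N ⟶ P) : pinl M N ≫ pcopair f g = f :=
  hom_ext fun m => by
    show f.1 m ⊔ g.1 ⊥ = f.1 m
    rw [hom_bot g]
    exact sup_bot_eq _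

theorem pinr_pcopair (f : M ⟶ P) (g : N ⟶ P) : pinr M N ≫ pcopair f g = g :=
  hom_ext fun n => by
    show f.1 ⊥ ⊔ g.1 n = g.1 n
    rw [hom_bot f]
    exact bot_sup_eq _

theorem pinl_pfst : pinl M N ≫ pfst M N = 𝟙 M := hom_ext fun m => rfl

theorem pinl_psnd : pinl M N ≫ psnd M N = (⊥ : M ⟶ N) :=
  hom_ext fun m => (bot_hom_val M N m).symm

theorem pinr_pfst : pinr M N ≫ pfst M N = (⊥ : N ⟶ M) :=
  hom_ext fun m => (bot_hom_val N M m).symm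

theorem pinr_psnd : pinr M N ≫ psnd M N = 𝟙 N := hom_ext fun m => rfl

theorem pinl_pcodiag : pinl N N ≫ pcodiag N = 𝟙 N :=
  hom_ext fun m => by
    show m ⊔ ⊥ = m
    exact sup_bot_eq _

theorem pinr_pcodiag : pinr N N ≫ pcodiag N = 𝟙 N :=
  hom_ext fun m => by
    show ⊥ ⊔ m = m
    exact bot_sup_eq _

theorem pcopair_unique {k k' : pmod M N ⟶ P} (h1 : pinl M N ≫ k = pinl M N ≫ k')
    (h2 : pinr M N ≫ k = pinr M N ≫ k') : k = k' := by
  apply hom_ext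
  intro p
  have hp : p = ((p.1, ⊥) : (pmod M N).carrier) ⊔ (⊥, p.2) := by
    apply Prod.ext
    · exact (sup_bot_eq _).symm
    · exact (bot_sup_eq _).symm
  rw [hp, hom_sup k, hom_sup k']
  have e1 := congrFun (congrArg Subtype.val h1) p.1
  have e2 := congrFun (congrArg Subtype.val h2) p.2
  show k.1 (p.1, ⊥) ⊔ k.1 (⊥, p.2) = k'.1 (p.1, ⊥) ⊔ k'.1 (⊥, p.2)
  rw [show k.1 (p.1, ⊥) = k'.1 (p.1, ⊥) from e1, show k.1 (⊥, p.2) = k'.1 (⊥, p.2) from e2]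

theorem ppair_unique {k k' : P ⟶ pmod M N} (h1 : k ≫ pfst M N = k' ≫ pfst M N)
    (h2 : k ≫ psnd M N = k' ≫ psnd M N) : k = k' := by
  apply hom_ext
  intro p
  have e1 := congrFun (congrArg Subtype.val h1) p
  have e2 := congrFun (congrArg Subtype.val h2) p
  exact Prod.ext e1 e2

end QMod
namespace QMod

open CategoryTheory

section Transfer

variable {C D : Type u} [UQuantale C] [UQuantale D] (e : QMod.{u, u} C ≌ QMod.{u, u} D)

theorem unit_cancel_left {W : QMod.{u, u} C} {Z : QMod.{u, u} C}
    {α β : (e.functor ⋙ e.inverse).obj W ⟶ Z}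
    (h : e.unit.app W ≫ α = e.unit.app W ≫ β) : α = β := by
  have h2 := congrArg (fun t => e.unitInv.app W ≫ t) h
  simpa using h2

theorem unitInv_cancel_right {Z W : QMod.{u, u} C}
    {α β : Z ⟶ (e.functor ⋙ e.inverse).obj W}
    (h : α ≫ e.unitInv.app W = β ≫ e.unitInv.app W) : α = β := by
  have h2 := congrArg (fun t => t ≫ e.unit.app W) h
  simpa using h2

theorem subsingleton_hom_from_functor_zmod (Y : QMod.{u, u} D) :
    Subsingleton (e.functor.obj (zmod C) ⟶ Y) := by
  constructor
  intro u v
  apply e.inverse.map_injective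
  apply unit_cancel_left e
  exact (subsingleton_hom_from_zmod (e.inverse.obj Y)).elim _ _

theorem subsingleton_hom_to_functor_zmod (Y : QMod.{u, u} D) :
    Subsingleton (Y ⟶ e.functor.obj (zmod C)) := by
  constructor
  intro u v
  apply e.inverse.map_injective
  apply unitInv_cancel_right e
  exact (subsingleton_hom_to_zmod (e.inverse.obj Y)).elim _ _

theorem map_bot (M N : QMod.{u, u} C) : e.functor.map (⊥ : M ⟶ N) = ⊥ := by
  rw [bot_eq_toZmod_comp M N, Functor.map_comp]
  have h1 : e.functor.map (fromZmod N) =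
      toZmod (e.functor.obj (zmod C)) ≫ fromZmod (e.functor.obj N) :=
    (subsingleton_hom_from_functor_zmod e (e.functor.obj N)).elim _ _
  rw [h1, ← Category.assoc]
  have h2 : e.functor.map (toZmod M) ≫ toZmod (e.functor.obj (zmod C)) =
      toZmod (e.functor.obj M) :=
    (subsingleton_hom_to_zmod _).elim _ _
  rw [h2, ← bot_eq_toZmod_comp]

theorem ppair_id_bot (M N : QMod.{u, u} C) :
    ppair (𝟙 M) (⊥ : M ⟶ N) = pinl M N :=
  hom_ext fun m => Prod.ext rfl (bot_hom_val M N m)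

theorem ppair_bot_id (M N : QMod.{u, u} C) :
    ppair (⊥ : N ⟶ M) (𝟙 N) = pinr M N :=
  hom_ext fun n => Prod.ext (bot_hom_val N M n) rfl

theorem map_monotone {M N : QMod.{u, u} C} {f g : M ⟶ N} (hfg : f ≤ g) :
    e.functor.map f ≤ e.functor.map g := by
  set FN := e.functor.obj N with hFN
  set u : pmod FN FN ⟶ e.functor.obj (pmod N N) :=
    pcopair (e.functor.map (pinl N N)) (e.functor.map (pinr N N)) with hu
  set v : e.functor.obj (pmod N N) ⟶ pmod FN FN :=
    ppair (e.functor.map (pfst N N)) (e.functor.map (psnd N N)) with hv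
  have huv : u ≫ v = 𝟙 _ := by
    apply pcopair_unique
    · rw [← Category.assoc, hu, pinl_pcopair, hv, comp_ppair, ← Functor.map_comp,
        ← Functor.map_comp, pinl_pfst, pinl_psnd, CategoryTheory.Functor.map_id, map_bot,
        ppair_id_bot, Category.comp_id]
    · rw [← Category.assoc, hu, pinr_pcopair, hv, comp_ppair, ← Functor.map_comp,
        ← Functor.map_comp, pinr_pfst, pinr_psnd, CategoryTheory.Functor.map_id, map_bot,
        ppair_bot_id, Category.comp_id]
  have hufst : u ≫ e.functor.map (pfst N N) = pfst FN FN := by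
    apply pcopair_unique
    · rw [← Category.assoc, hu, pinl_pcopair, ← Functor.map_comp, pinl_pfst,
        CategoryTheory.Functor.map_id, pinl_pfst]
    · rw [← Category.assoc, hu, pinr_pcopair, ← Functor.map_comp, pinr_pfst,
        map_bot, pinr_pfst]
  have husnd : u ≫ e.functor.map (psnd N N) = psnd FN FN := by
    apply pcopair_unique
    · rw [← Category.assoc, hu, pinl_pcopair, ← Functor.map_comp, pinl_psnd,
        map_bot, pinl_psnd]
    · rw [← Category.assoc, hu, pinr_pcopair, ← Functor.map_comp, pinr_psnd,
        CategoryTheory.Functor.map_id, pinr_psnd]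
  have hucodiag : u ≫ e.functor.map (pcodiag N) = pcodiag FN := by
    apply pcopair_unique
    · rw [← Category.assoc, hu, pinl_pcopair, ← Functor.map_comp, pinl_pcodiag,
        CategoryTheory.Functor.map_id, pinl_pcodiag]
    · rw [← Category.assoc, hu, pinr_pcopair, ← Functor.map_comp, pinr_pcodiag,
        CategoryTheory.Functor.map_id, pinr_pcodiag]
  have hvu : v ≫ u = 𝟙 _ := by
    obtain ⟨w, hw⟩ := e.functor.map_surjective (v ≫ u)
    have hwfst : w ≫ pfst N N = 𝟙 _ ≫ pfst N N := by
      apply e.functor.map_injective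
      rw [Functor.map_comp, hw, Category.assoc, hufst, Category.id_comp]
      rw [hv, ppair_fst]
    have hwsnd : w ≫ psnd N N = 𝟙 _ ≫ psnd N N := by
      apply e.functor.map_injective
      rw [Functor.map_comp, hw, Category.assoc, husnd, Category.id_comp]
      rw [hv, ppair_snd]
    have hwid : w = 𝟙 _ := ppair_unique hwfst hwsnd
    rw [← hw, hwid, CategoryTheory.Functor.map_id]
  have hFpfst : e.functor.map (pfst N N) = v ≫ pfst FN FN := by
    calc e.functor.map (pfst N N) = (v ≫ u) ≫ e.functor.map (pfst N N) := by
          rw [hvu, Category.id_comp]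
      _ = v ≫ pfst FN FN := by rw [Category.assoc, hufst]
  have hFcodiag : e.functor.map (pcodiag N) = v ≫ pcodiag FN := by
    calc e.functor.map (pcodiag N) = (v ≫ u) ≫ e.functor.map (pcodiag N) := by
          rw [hvu, Category.id_comp]
      _ = v ≫ pcodiag FN := by rw [Category.assoc, hucodiag]
  have hcf : ppair f g ≫ pfst N N = f := ppair_fst f g
  have hcg : ppair f g ≫ pcodiag N = g := by
    apply hom_ext
    intro m
    show f.1 m ⊔ g.1 m = g.1 m
    exact sup_eq_right.2 (hfg m)
  have e1 : e.functor.map f = (e.functor.map (ppair f g) ≫ v) ≫ pfst FN FN := by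
    rw [Category.assoc, ← hFpfst, ← Functor.map_comp, hcf]
  have e2 : e.functor.map g = (e.functor.map (ppair f g) ≫ v) ≫ pcodiag FN := by
    rw [Category.assoc, ← hFcodiag, ← Functor.map_comp, hcg]
  refine hom_le_iff.2 fun y => ?_
  rw [e1, e2]
  show ((e.functor.map (ppair f g) ≫ v).1 y).1 ≤
    ((e.functor.map (ppair f g) ≫ v).1 y).1 ⊔ ((e.functor.map (ppair f g) ≫ v).1 y).2
  exact le_sup_left

theorem map_le_iff {M N : QMod.{u, u} C} (f g : M ⟶ N) :
    e.functor.map f ≤ e.functor.map g ↔ f ≤ g := by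
  constructor
  · intro h
    have h2 := map_monotone e.symm h
    refine hom_le_iff.2 fun m => ?_
    have hnatf := congrFun (congrArg Subtype.val (e.unitIso.hom.naturality f)) m
    have hnatg := congrFun (congrArg Subtype.val (e.unitIso.hom.naturality g)) m
    have hinv : ∀ x : N.carrier,
        (e.unitInv.app N).1 ((e.unit.app N).1 x) = x := fun x =>
      congrFun (congrArg Subtype.val (e.unitIso.hom_inv_id_app N)) x
    calc f.1 m = (e.unitInv.app N).1 ((e.unit.app N).1 (f.1 m)) := (hinv _).symm
      _ = (e.unitInv.app N).1
            (((e.functor ⋙ e.inverse).map f).1 ((e.unit.app M).1 m)) := by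
          rw [show (e.unit.app N).1 (f.1 m) =
            ((e.functor ⋙ e.inverse).map f).1 ((e.unit.app M).1 m) from hnatf]
      _ ≤ (e.unitInv.app N).1
            (((e.functor ⋙ e.inverse).map g).1 ((e.unit.app M).1 m)) :=
          hom_mono _ (hom_le_iff.1 h2 _)
      _ = (e.unitInv.app N).1 ((e.unit.app N).1 (g.1 m)) := by
          rw [show (e.unit.app N).1 (g.1 m) =
            ((e.functor ⋙ e.inverse).map g).1 ((e.unit.app M).1 m) from hnatg]
      _ = g.1 m := hinv _
  · exact map_monotone e

theorem unitInv_nat {P P' : QMod.{u, u} C} (w : P ⟶ P') :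
    e.unitInv.app P ≫ w = (e.functor ⋙ e.inverse).map w ≫ e.unitInv.app P' := by
  have h0 := e.unitIso.inv.naturality w
  simp only [Functor.id_map] at h0
  exact h0.symm

theorem isGenerator_transfer {R : QMod.{u, u} D} (hR : IsGenerator R) :
    IsGenerator (e.inverse.obj R) := by
  intro M N u v h
  apply e.functor.map_injective
  apply hR
  intro k
  have h3 := h (e.inverse.map k ≫ e.unitInv.app M)
  rw [Category.assoc, Category.assoc, unitInv_nat e u, unitInv_nat e v,
    ← Category.assoc, ← Category.assoc] at h3
  have h4 : e.inverse.map k ≫ (e.functor ⋙ e.inverse).map u =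
      e.inverse.map k ≫ (e.functor ⋙ e.inverse).map v :=
    unitInv_cancel_right e h3
  simp only [Functor.comp_map] at h4
  rw [← Functor.map_comp, ← Functor.map_comp] at h4
  exact e.inverse.map_injective h4

theorem isProjective_transfer {R : QMod.{u, u} D} (hR : IsProjective R) :
    IsProjective (e.inverse.obj R) := by
  intro M N p hp h
  haveI : Epi p := hp
  haveI hFp : Epi (e.functor.map p) := inferInstance
  obtain ⟨k, hk⟩ := hR (e.functor.map p) hFp (e.counitInv.app R ≫ e.functor.map h)
  refine ⟨e.inverse.map k ≫ e.unitInv.app M, ?_⟩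
  rw [Category.assoc, unitInv_nat e p, ← Category.assoc]
  simp only [Functor.comp_map]
  rw [← Functor.map_comp, hk, Functor.map_comp, Category.assoc]
  have h5 : e.inverse.map (e.functor.map h) ≫ e.unitInv.app N =
      e.unitInv.app (e.inverse.obj R) ≫ h := by
    have := unitInv_nat e h
    simp only [Functor.comp_map] at this
    exact this.symm
  rw [h5, ← Category.assoc]
  rw [show e.inverse.map (e.counitInv.app R) ≫ e.unitInv.app (e.inverse.obj R) =
    𝟙 (e.inverse.obj R) from e.inverse_counitInv_comp R, Category.id_comp]

end Transfer

end QMod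
namespace QMod

variable {B : Type u} [UQuantale B]

def rmulHom (M : QMod.{u, u} B) (m : M.carrier) : regMod B ⟶ M := by
  refine ⟨fun b => M.act m (toA b), ?_, ?_⟩
  · intro s
    show M.act m (toA (sSup s)) = ⨆ b ∈ s, M.act m (toA b)
    exact M.act_sSup m s
  · intro b a
    show M.act m (toA ((regMod B).act b a)) = M.act (M.act m (toA b)) a
    exact M.act_mul m (toA b) a

theorem regMod_isGenerator : IsGenerator (regMod B) := by
  intro M N u v h
  apply hom_ext
  intro m
  have h1 := congrFun (congrArg Subtype.val (h (rmulHom M m))) (ofA 1)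
  have h2 : M.act m (toA (ofA (1 : B))) = m := M.act_one m
  show u.1 m = v.1 m
  rw [← h2]
  exact h1

theorem regMod_isProjective : IsProjective (regMod B) := by
  intro M N p hp h
  obtain ⟨m, hm⟩ := surjective_of_epi p hp (h.1 (ofA 1))
  refine ⟨rmulHom M m, ?_⟩
  apply hom_ext
  intro b
  show p.1 (M.act m (toA b)) = h.1 b
  rw [p.2.2 m (toA b), hm]
  have h3 := h.2.2 (ofA (1 : B)) (toA b)
  rw [← h3]
  exact congrArg h.1 (one_mul (toA b))

/-- Left multiplication as a module endomorphism of the regular module. -/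
def lmulHom (b : B) : regMod B ⟶ regMod B := by
  refine ⟨fun x => ofA (b * toA x), ?_, ?_⟩
  · intro s
    show ofA (b * toA (sSup s)) = ⨆ x ∈ s, ofA (b * toA x)
    exact UQuantale.mul_sSup b s
  · intro x a
    show ofA (b * toA ((regMod B).act x a)) = (regMod B).act (ofA (b * toA x)) a
    exact (mul_assoc b (toA x) a).symm

theorem lmulHom_one : lmulHom (1 : B) = 𝟙 (regMod B) :=
  hom_ext fun x => one_mul (toA x)

theorem lmulHom_mul (b b' : B) : lmulHom (b * b') = lmulHom b' ≫ lmulHom b :=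
  hom_ext fun x => mul_assoc b b' (toA x)

theorem lmulHom_inj : Function.Injective (lmulHom (B := B)) := by
  intro b b' h
  have h1 : b * 1 = b' * 1 := congrFun (congrArg Subtype.val h) (ofA 1)
  rwa [mul_one, mul_one] at h1

theorem lmulHom_mono {b b' : B} (h : b ≤ b') : lmulHom b ≤ lmulHom b' :=
  hom_le_iff.2 fun x => UQuantale.mul_mono_left h (toA x)

theorem end_eq_lmulHom (φ : regMod B ⟶ regMod B) : φ = lmulHom (toA (φ.1 (ofA 1))) := by
  apply hom_ext
  intro x
  calc φ.1 x = φ.1 ((regMod B).act (ofA 1) (toA x)) :=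
        congrArg φ.1 (one_mul (toA x)).symm
    _ = (regMod B).act (φ.1 (ofA 1)) (toA x) := φ.2.2 (ofA 1) (toA x)

open CategoryTheory in
/-- The forward direction of Morita's theorem. -/
theorem projective_generator_of_morita {A B : Type u} [UQuantale A] [UQuantale B]
    (e : QMod.{u, u} A ≌ QMod.{u, u} B) :
    ∃ Q : QMod.{u, u} A, IsGenerator Q ∧ IsProjective Q ∧
      ∃ f : B → (Q ⟶ Q), IsQuantaleIso f := by
  refine ⟨e.inverse.obj (regMod B), isGenerator_transfer e regMod_isGenerator,
    isProjective_transfer e regMod_isProjective,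
    fun b => e.inverse.map (lmulHom b), ⟨?_, ?_⟩, ?_, ?_, ?_⟩
  · intro b b' h
    exact lmulHom_inj (e.inverse.map_injective h)
  · intro ψ
    obtain ⟨φ, hφ⟩ := e.inverse.map_surjective ψ
    refine ⟨toA (φ.1 (ofA 1)), ?_⟩
    show e.inverse.map (lmulHom (toA (φ.1 (ofA 1)))) = ψ
    rw [← end_eq_lmulHom φ]
    exact hφ
  · intro s
    show e.inverse.map (lmulHom (sSup s)) = ⨆ b ∈ s, e.inverse.map (lmulHom b)
    have lmono : ∀ {b b' : B}, b ≤ b' →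
        e.inverse.map (lmulHom b) ≤ e.inverse.map (lmulHom b') := fun h =>
      map_monotone e.symm (lmulHom_mono h)
    have lrefl : ∀ {b b' : B},
        e.inverse.map (lmulHom b) ≤ e.inverse.map (lmulHom b') → b ≤ b' := by
      intro b b' h
      have h2 := (map_le_iff e.symm (lmulHom b) (lmulHom b')).1 h
      have h1 : b * 1 ≤ b' * 1 := hom_le_iff.1 h2 (ofA 1)
      calc b = b * 1 := (mul_one b).symm
        _ ≤ b' * 1 := h1
        _ = b' := mul_one b'
    apply le_antisymm
    · obtain ⟨b₀, hb₀⟩ : ∃ b₀ : B,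
          e.inverse.map (lmulHom b₀) = ⨆ b ∈ s, e.inverse.map (lmulHom b) := by
        obtain ⟨φ, hφ⟩ := e.inverse.map_surjective (⨆ b ∈ s, e.inverse.map (lmulHom b))
        exact ⟨toA (φ.1 (ofA 1)), by rw [← end_eq_lmulHom φ]; exact hφ⟩
      rw [← hb₀]
      apply lmono
      apply sSup_le
      intro b hb
      apply lrefl
      rw [hb₀]
      exact le_iSup₂ (f := fun (b : B) (_ : b ∈ s) => e.inverse.map (lmulHom b)) b hb
    · exact iSup₂_le fun b hb => lmono (le_sSup hb)
  · show e.inverse.map (lmulHom 1) = 1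
    rw [lmulHom_one]
    exact e.inverse.map_id _
  · intro b b'
    show e.inverse.map (lmulHom (b * b')) = _
    rw [lmulHom_mul, Functor.map_comp]
    rfl

end QMod
theorem morita_iff_projective_generator (A B : Type u) [UQuantale A] [UQuantale B] :
    MoritaEquivalent A B ↔
      ∃ Q : QMod.{u, u} A, QMod.IsGenerator Q ∧ QMod.IsProjective Q ∧
        ∃ f : B → (Q ⟶ Q), IsQuantaleIso f := by
  constructor
  · rintro ⟨e⟩
    exact QMod.projective_generator_of_morita e
  · rintro ⟨Q, hgen, hproj, f, hf⟩
    exact QMod.morita_of_projective_generator Q hgen hproj f hf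
end

section
/- Let A be a quantale and e an idempotent element of A (e*e = e). The right A-module eA is a generator for the category Mod_A(Sl) of right A-modules if and only if e is a full idempotent, i.e. AeA = A, where AeA = { ⋁_{i∈I} a_i*e*a'_i : {a_i}_{i∈I}, {a'_i}_{i∈I} ⊆ A }. -/
open CategoryTheory Set

universe u v w

/-! ### Sub-sup-lattices given by sup-closed predicates -/

section SubLattice

variable {L : Type u} [CompleteLattice L]

/-- A predicate closed under arbitrary suprema. -/
class SSupClosed (p : L → Prop) : Prop where
  closed : ∀ s : Set L, (∀ x ∈ s, p x) → p (sSup s)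

instance subtypeSupSet (p : L → Prop) [SSupClosed p] : SupSet { x : L // p x } :=
  ⟨fun s => ⟨sSup (Subtype.val '' s), SSupClosed.closed _ (by rintro x ⟨y, _, rfl⟩; exact y.2)⟩⟩

/-- The sub-sup-lattice on a sup-closed subset: suprema are computed as in `L`. -/
instance subtypeCompleteLattice (p : L → Prop) [SSupClosed p] :
    CompleteLattice { x : L // p x } :=
  completeLatticeOfSup _ (fun s => by
    constructor
    · intro x hx
      show x.1 ≤ sSup (Subtype.val '' s)
      exact le_sSup (Set.mem_image_of_mem _ hx)
    · intro b hb
      show sSup (Subtype.val '' s) ≤ b.1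
      refine sSup_le ?_
      rintro y ⟨z, hz, rfl⟩
      exact hb hz)

theorem subtype_sSup_val (p : L → Prop) [SSupClosed p] (s : Set { x : L // p x }) :
    (sSup s).1 = sSup (Subtype.val '' s) := rfl

theorem subtype_iSup_val {p : L → Prop} [SSupClosed p] {ι : Sort w} (f : ι → { x : L // p x }) :
    (⨆ i, f i).1 = ⨆ i, (f i).1 := by
  show sSup (Subtype.val '' Set.range f) = _
  rw [← Set.range_comp]
  rfl

end SubLattice

/-! ### Submodules and subquantales determined by idempotents -/

section Idem

variable {A : Type u} [UQuantale A]

instance leftFixedClosed (e : A) : SSupClosed (fun a : A => e * a = a) :=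
  ⟨fun s hs => by
    rw [UQuantale.mul_sSup, sSup_eq_iSup]
    exact iSup_congr fun a => iSup_congr fun ha => hs a ha⟩

instance rightFixedClosed (e : A) : SSupClosed (fun a : A => a * e = a) :=
  ⟨fun s hs => by
    rw [UQuantale.sSup_mul, sSup_eq_iSup]
    exact iSup_congr fun a => iSup_congr fun ha => hs a ha⟩

instance cornerClosed (e : A) : SSupClosed (fun x : A => e * x * e = x) :=
  ⟨fun s hs => by
    rw [UQuantale.mul_sSup, UQuantale.iSup_mul, sSup_eq_iSup]
    exact iSup_congr fun a => by
      rw [UQuantale.iSup_mul]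
      exact iSup_congr fun ha => hs a ha⟩

instance actFixedClosed (M : QMod.{u, v} A) (e : A) :
    SSupClosed (fun m : M.carrier => M.act m e = m) :=
  ⟨fun s hs => by
    rw [M.sSup_act s e, sSup_eq_iSup]
    exact iSup_congr fun m => iSup_congr fun hm => hs m hm⟩

/-- The right `A`-module `eA = {a : A // e * a = a}` determined by an element `e`
(the splitting object of the idempotent endomorphism `a ↦ e * a` of `A` when
`e` is idempotent). -/
def idemMod (e : A) : QMod.{u, u} A where
  carrier := { a : A // e * a = a }
  act x b := ⟨x.1 * b, by rw [← mul_assoc, x.2]⟩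
  act_one x := Subtype.ext (mul_one _)
  act_mul x a b := Subtype.ext (mul_assoc _ _ _).symm
  sSup_act s a := by
    apply Subtype.ext
    simp only [subtype_iSup_val]
    show sSup (Subtype.val '' s) * a = _
    rw [UQuantale.sSup_mul, iSup_image]
  act_sSup x s := by
    apply Subtype.ext
    simp only [subtype_iSup_val]
    exact UQuantale.mul_sSup x.1 s

/-- For an idempotent `e`, the *corner* quantale `eAe = {x : A // e * x * e = x}`:
multiplication is that of `A`, the unit is `e`, and suprema are computed in `A`. -/
def cornerQuantale (e : A) (he : e * e = e) : UQuantale { x : A // e * x * e = x } := by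
  have hleft : ∀ x : A, e * x * e = x → e * x = x := fun x hx => by
    rw [← hx, ← mul_assoc, ← mul_assoc, he]
  have hright : ∀ x : A, e * x * e = x → x * e = x := fun x hx => by
    rw [← hx, mul_assoc, he]
  exact
  { subtypeCompleteLattice (fun x : A => e * x * e = x) with
    mul := fun x y => ⟨x.1 * y.1, by
      rw [← mul_assoc, hleft x.1 x.2, mul_assoc, hright y.1 y.2]⟩
    one := ⟨e, by rw [he, he]⟩
    mul_assoc := fun x y z => Subtype.ext (mul_assoc _ _ _)
    one_mul := fun x => Subtype.ext (hleft x.1 x.2)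
    mul_one := fun x => Subtype.ext (hright x.1 x.2)
    mul_sSup := fun a s => by
      apply Subtype.ext
      simp only [subtype_iSup_val]
      show a.1 * sSup (Subtype.val '' s) = _
      rw [UQuantale.mul_sSup, iSup_image]
      rfl
    sSup_mul := fun s b => by
      apply Subtype.ext
      simp only [subtype_iSup_val]
      show sSup (Subtype.val '' s) * b.1 = _
      rw [UQuantale.sSup_mul, iSup_image]
      rfl
  }

/-- `e` is a *full* idempotent: `e * e = e` and `AeA = A`, i.e. every element of `A`
is a supremum of elements of the form `a * e * a'`. -/
def IsFullIdempotent (e : A) : Prop :=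
  e * e = e ∧
    ∀ x : A, ∃ (ι : Type u) (f g : ι → A), x = ⨆ i, f i * e * g i

end Idem


/-! ### Auxiliary constructions for Statement 11 -/

section Aux11

open OrderDual

variable {A : Type u} [UQuantale A]

theorem aux_mul_sup (a y z : A) : a * (y ⊔ z) = a * y ⊔ a * z := by
  have h := UQuantale.mul_sSup a {y, z}
  rwa [sSup_pair, iSup_pair] at h

theorem aux_mul_le_mul_left (a : A) {y z : A} (h : y ≤ z) : a * y ≤ a * z := by
  have h2 : a * (y ⊔ z) = a * y ⊔ a * z := aux_mul_sup a y z
  rw [sup_eq_right.mpr h] at h2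
  rw [h2]; exact le_sup_left

/-- Left residuation in a quantale. -/
def ldiv (a x : A) : A := sSup {y | a * y ≤ x}

theorem le_ldiv_iff {a x y : A} : y ≤ ldiv a x ↔ a * y ≤ x := by
  constructor
  · intro h
    have h2 : a * ldiv a x ≤ x := by
      rw [ldiv, UQuantale.mul_sSup]
      exact iSup₂_le fun b hb => hb
    exact le_trans (aux_mul_le_mul_left a h) h2
  · intro h
    exact le_sSup h

theorem ldiv_one (x : A) : ldiv 1 x = x :=
  eq_of_forall_le_iff fun z => by rw [le_ldiv_iff, one_mul]

/-- The action of `A` on the order-dual of `A`, by left residuation. -/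
def dact (x : Aᵒᵈ) (a : A) : Aᵒᵈ := toDual (ldiv a (ofDual x))

theorem dact_le_iff {x : Aᵒᵈ} {a : A} {c : Aᵒᵈ} :
    dact x a ≤ c ↔ a * ofDual c ≤ ofDual x := by
  rw [dact, toDual_le, le_ldiv_iff]

/-- The order-dual of `A` as a right `A`-module, with action given by left residuation. -/
def dualMod (A : Type u) [UQuantale A] : QMod.{u, u} A where
  carrier := Aᵒᵈ
  act := dact
  act_one x := eq_of_forall_ge_iff fun c => by
    rw [dact_le_iff, one_mul, ← ofDual_le_ofDual]
  act_mul x a b := eq_of_forall_ge_iff fun c => by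
    rw [dact_le_iff, dact_le_iff, dact, ofDual_toDual, le_ldiv_iff, mul_assoc]
  sSup_act s a := eq_of_forall_ge_iff fun c => by
    rw [iSup₂_le_iff, dact_le_iff, ofDual_sSup, le_sInf_iff]
    constructor
    · intro h m hm
      rw [dact_le_iff]
      exact h (ofDual m) (by simpa using hm)
    · intro h b hb
      have := h (toDual b) (by simpa using hb)
      rwa [dact_le_iff] at this
  act_sSup x s := eq_of_forall_ge_iff fun c => by
    rw [iSup₂_le_iff, dact_le_iff, UQuantale.sSup_mul, iSup₂_le_iff]
    constructor
    · intro h a ha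
      rw [dact_le_iff]
      exact h a ha
    · intro h a ha
      have := h a ha
      rwa [dact_le_iff] at this

/-- `A` as a right module over itself. -/
def regMod (A : Type u) [UQuantale A] : QMod.{u, u} A where
  carrier := A
  act m a := m * a
  act_one := mul_one
  act_mul m a b := (mul_assoc m a b).symm
  sSup_act s a := UQuantale.sSup_mul s a
  act_sSup m s := UQuantale.mul_sSup m s

/-- The module morphism `A → Aᵒᵈ` given by `x ↦ x \ n`. -/
def resHom (n : A) : regMod A ⟶ dualMod A := by
  refine ⟨fun x => (dualMod A).act (toDual n) x, ?_, ?_⟩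
  · intro s
    dsimp only [regMod, dualMod]
    apply eq_of_forall_ge_iff
    intro c
    change Set A at s
    show dact (toDual n) (sSup (s : Set A)) ≤ c ↔ (⨆ m ∈ (s : Set A), dact (toDual n) m) ≤ c
    rw [iSup₂_le_iff]
    rw [dact_le_iff]
    rw [UQuantale.sSup_mul, iSup₂_le_iff]
    constructor
    · intro h a ha
      rw [dact_le_iff]
      exact h a ha
    · intro h a ha
      have := h a ha
      rw [dact_le_iff] at this
      exact this
  · intro m a
    dsimp only [regMod, dualMod]
    apply eq_of_forall_ge_iff
    intro c
    change A at m
    show dact (toDual n) ((m : A) * a) ≤ c ↔ dact (dact (toDual n) m) a ≤ c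
    rw [dact_le_iff, dact_le_iff]
    show _ ↔ a * ofDual c ≤ @ldiv A _ m n
    rw [le_ldiv_iff, mul_assoc]
    exact Iff.rfl

theorem resHom_apply (n x : A) : (resHom n).1 x = toDual (ldiv x n) := rfl

/-- Morphisms out of `eA` are given by left multiplication. -/
theorem idemMod_hom_eq {e : A} (he : e * e = e) {M : QMod.{u, u} A}
    (h : idemMod e ⟶ M) (x : (idemMod e).carrier) :
    h.1 x = M.act (h.1 ⟨e, he⟩) x.1 := by
  have hx : (idemMod e).act ⟨e, he⟩ x.1 = x := Subtype.ext x.2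
  conv_lhs => rw [← hx]
  exact h.2.2 _ _

end Aux11

/-! ### STATEMENT 11 -/

/-- for an idempotent `e` in a quantale `A`, the right `A`-module `eA`
is a generator of the category of right `A`-modules if and only if `e` is a full
idempotent, i.e. `AeA = A` (every element of `A` is a supremum of elements
`a * e * a'`). -/
theorem idemMod_generator_iff_full {A : Type u} [UQuantale A] (e : A) (he : e * e = e) :
    QMod.IsGenerator (idemMod e) ↔ IsFullIdempotent e := by
  constructor
  · -- generator implies full
    intro hgen
    refine ⟨he, fun n => ?_⟩
    set ι := {p : A × A // p.1 * e * p.2 ≤ n} with hι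
    refine ⟨ι, fun i => i.1.1, fun i => i.1.2, ?_⟩
    set σ : A := ⨆ i : ι, i.1.1 * e * i.1.2 with hσ
    have hσle : σ ≤ n := iSup_le fun i => i.2
    -- the two morphisms A → Aᵒᵈ
    have key : ∀ h : idemMod e ⟶ regMod A, h ≫ resHom n = h ≫ resHom σ := by
      intro h
      apply Subtype.ext
      funext x
      show (resHom n).1 (h.1 x) = (resHom σ).1 (h.1 x)
      show OrderDual.toDual (ldiv (A := A) (h.1 x) n) = OrderDual.toDual (ldiv (A := A) (h.1 x) σ)
      apply congrArg
      set m : A := h.1 ⟨e, he⟩ with hm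
      have hme : m * e = m := by
        have : (idemMod e).act ⟨e, he⟩ e = ⟨e, he⟩ := Subtype.ext he
        have h2 := h.2.2 ⟨e, he⟩ e
        rw [this] at h2
        exact h2.symm
      have hx : h.1 x = m * x.1 := idemMod_hom_eq he h x
      apply eq_of_forall_le_iff
      intro z
      simp only [hx]
      rw [le_ldiv_iff, le_ldiv_iff]
      constructor
      · intro hz
        have heq : m * x.1 * z = (m * e) * (x.1 * z) := by
          rw [hme, mul_assoc]
        have hform : m * x.1 * z = m * e * (x.1 * z) := heq
        have hle : m * e * (x.1 * z) ≤ n := by rw [← hform]; exact hz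
        have : m * e * (x.1 * z) ≤ σ :=
          le_iSup (fun i : ι => i.1.1 * e * i.1.2) ⟨(m, x.1 * z), hle⟩
        rw [hform]
        exact this
      · intro hz
        exact hz.trans hσle
    have := hgen (resHom n) (resHom σ) key
    have h1 : (resHom n).1 (1 : A) = (resHom σ).1 (1 : A) := by rw [this]
    have h2 : ldiv 1 n = ldiv 1 σ := congrArg OrderDual.ofDual h1
    have hid : ∀ w : A, ldiv (1 : A) w = w := fun w =>
      eq_of_forall_le_iff fun z => by rw [le_ldiv_iff, one_mul]
    rw [hid, hid] at h2
    exact h2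
  · -- full implies generator
    rintro ⟨_, hfull⟩
    intro M N f g H
    apply Subtype.ext
    funext m
    obtain ⟨ι, u, v, h1⟩ := hfull 1
    -- the morphism eA → M given by m
    have hommk : ∀ m₀ : M.carrier, QMod.IsHom (idemMod e) M (fun x => M.act m₀ x.1) := by
      intro m₀
      constructor
      · intro s
        change Set {a : A // e * a = a} at s
        show M.act m₀ (sSup (Subtype.val '' (s : Set {a : A // e * a = a}))) = _
        rw [M.act_sSup, iSup_image]
        rfl
      · intro x a
        exact M.act_mul m₀ x.1 a
    have Hpt : ∀ (m₀ : M.carrier) (x : (idemMod e).carrier),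
        f.1 (M.act m₀ x.1) = g.1 (M.act m₀ x.1) := by
      intro m₀ x
      have := H ⟨fun x => M.act m₀ x.1, hommk m₀⟩
      have := congrArg Subtype.val this
      exact congrFun this x
    have hm : m = ⨆ i, M.act (M.act m (u i)) (e * v i) := by
      conv_lhs => rw [← M.act_one m, h1]
      rw [M.act_iSup]
      refine iSup_congr fun i => ?_
      rw [mul_assoc, M.act_mul]
    rw [hm, QMod.hom_iSup f, QMod.hom_iSup g]
    refine iSup_congr fun i => ?_
    exact Hpt (M.act m (u i)) ⟨e * v i, by rw [← mul_assoc, he]⟩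
end

section
/- Let A be a quantale and e a full idempotent in A, i.e. e*e = e and AeA = A, where AeA = { ⋁_{i∈I} a_i*e*a'_i : {a_i}_{i∈I}, {a'_i}_{i∈I} ⊆ A }. Then the quantales A and eAe are Morita equivalent, where eAe = {e*a*e : a ∈ A} is a quantale under the multiplication of A with unit e. -/
open CategoryTheory Set

universe u v w

/-! ### Proof development for Statement 12 -/

section MoritaProof

open UQuantale QMod CategoryTheory

variable {A : Type u} [UQuantale A]

/-- The corner subtype. -/
abbrev Corner (e : A) := { x : A // e * x * e = x }

theorem corner_mul_e {e : A} (he : e * e = e) {x : A} (hx : e * x * e = x) : x * e = x := by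
  rw [← hx, mul_assoc, he]

theorem corner_e_mul {e : A} (he : e * e = e) {x : A} (hx : e * x * e = x) : e * x = x := by
  rw [← hx, ← mul_assoc, ← mul_assoc, he]

/-- Restriction of scalars object: `Me = {m : M // m·e = m}` as an `eAe`-module. -/
def resObj (e : A) (he : e * e = e) (M : QMod.{u,u} A) :
    @QMod.{u,u} (Corner e) (cornerQuantale e he) :=
  letI : UQuantale (Corner e) := cornerQuantale e he
  { carrier := { m : M.carrier // M.act m e = m }
    act := fun m x => ⟨M.act m.1 x.1, by
      rw [← M.act_mul, corner_mul_e he x.2]⟩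
    act_one := fun m => Subtype.ext m.2
    act_mul := fun m a b => Subtype.ext (by
      show M.act m.1 (a.1 * b.1) = M.act (M.act m.1 a.1) b.1
      rw [M.act_mul])
    sSup_act := fun s a => by
      apply Subtype.ext
      show M.act (sSup (Subtype.val '' s)) a.1 = _
      rw [M.sSup_act]
      simp only [subtype_iSup_val]
      rw [iSup_image]
    act_sSup := fun m s => by
      apply Subtype.ext
      show M.act m.1 (sSup (Subtype.val '' s)) = _
      rw [M.act_sSup]
      simp only [subtype_iSup_val]
      rw [iSup_image] }

theorem resObj_iSup_val (e : A) (he : e * e = e) (M : QMod.{u,u} A) {ι : Sort w} :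
    letI : UQuantale (Corner e) := cornerQuantale e he
    ∀ (t : ι → (resObj e he M).carrier), (⨆ i, t i).1 = ⨆ i, (t i).1 :=
  fun t => subtype_iSup_val t

/-- Restriction of scalars functor `Mod_A → Mod_{eAe}`. -/
def resFunctor (e : A) (he : e * e = e) :
    QMod.{u,u} A ⥤ @QMod.{u,u} (Corner e) (cornerQuantale e he) :=
  letI : UQuantale (Corner e) := cornerQuantale e he
  { obj := resObj e he
    map := fun {M N} φ => ⟨fun m => ⟨φ.1 m.1, by rw [← φ.2.2, m.2]⟩, by
      constructor
      · intro s
        apply Subtype.ext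
        show φ.1 (sSup (Subtype.val '' s)) = _
        rw [φ.2.1]
        simp only [resObj_iSup_val]
        erw [iSup_image]
        exact iSup_congr fun b => by symm; exact resObj_iSup_val e he N _
      · intro m a
        exact Subtype.ext (φ.2.2 m.1 a.1)⟩
    map_id := fun M => Subtype.ext rfl
    map_comp := fun φ ψ => Subtype.ext rfl }

theorem resFunctorObj_iSup_val (e : A) (he : e * e = e) (M : QMod.{u,u} A) {ι : Sort w} :
    letI : UQuantale (Corner e) := cornerQuantale e he
    ∀ (t : ι → ((resFunctor e he).obj M).carrier), (⨆ i, t i).1 = ⨆ i, (t i).1 :=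
  fun t => subtype_iSup_val t

theorem one_decomp_act {e : A} {ι : Type u} {f g : ι → A}
    (h1 : (1 : A) = ⨆ i, f i * e * g i) (M : QMod.{u,u} A) (m : M.carrier) :
    m = ⨆ i, M.act (M.act m (f i * e)) (g i) := by
  conv_lhs => rw [← M.act_one m, h1]
  rw [M.act_iSup]
  exact iSup_congr fun i => by rw [← M.act_mul]

theorem resFunctor_faithful (e : A) (he : e * e = e) {ι : Type u} {f g : ι → A}
    (h1 : (1 : A) = ⨆ i, f i * e * g i) : (resFunctor e he).Faithful := by
  letI : UQuantale (Corner e) := cornerQuantale e he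
  constructor
  intro M N φ ψ hmap
  apply Subtype.ext
  funext m
  have key : ∀ χ : M ⟶ N, χ.1 m =
      ⨆ i, N.act (((resFunctor e he).map χ).1
        ⟨M.act m (f i * e), by rw [← M.act_mul, mul_assoc, he]⟩).1 (g i) := by
    intro χ
    conv_lhs => rw [one_decomp_act h1 M m]
    rw [hom_iSup]
    exact iSup_congr fun i => by rw [χ.2.2]; rfl
  rw [key φ, key ψ, hmap]

theorem e_mul_e_mul {e : A} (he : e * e = e) (z : A) : e * (e * z) = e * z := by
  rw [← mul_assoc, he]

theorem act_e_absorb {e : A} (M : QMod.{u,v} A) {m : M.carrier} (hm : M.act m e = m) (z : A) :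
    M.act m (e * z) = M.act m z := by rw [M.act_mul, hm]

/-- The element `m·(c*e)` of `Me`. -/
def melt (e : A) (he : e * e = e) (M : QMod.{u,u} A) (m : M.carrier) (c : A) :
    { n : M.carrier // M.act n e = n } :=
  ⟨M.act m (c * e), by rw [← M.act_mul, mul_assoc, he]⟩

/-- The element `e*z*e` of the corner. -/
def cornerEl (e : A) (he : e * e = e) (z : A) : Corner e :=
  ⟨e * z * e, by simp only [mul_assoc, he, e_mul_e_mul he]⟩

theorem keyexp (e : A) (he : e * e = e) {ι : Type u} {f g : ι → A}
    (h1 : (1 : A) = ⨆ i, f i * e * g i) (M N : QMod.{u,u} A) :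
    letI : UQuantale (Corner e) := cornerQuantale e he
    ∀ (h : resObj e he M ⟶ resObj e he N) (m : M.carrier) (c : A),
    (h.1 (melt e he M m c)).1
      = ⨆ j, N.act (h.1 (melt e he M m (f j))).1 (e * (g j * c) * e) := by
  letI : UQuantale (Corner e) := cornerQuantale e he
  intro h m c
  have hmc : melt e he M m c
      = ⨆ j, (resObj e he M).act (melt e he M m (f j)) (cornerEl e he (g j * c)) := by
    apply Subtype.ext
    rw [resObj_iSup_val]
    show M.act m (c * e) = ⨆ j, M.act (M.act m (f j * e)) (e * (g j * c) * e)
    have h2 : c * e = ⨆ j, (f j * e) * (g j * (c * e)) := by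
      conv_lhs => rw [← one_mul (c * e), h1]
      rw [UQuantale.iSup_mul]
      exact iSup_congr fun j => by simp only [mul_assoc]
    rw [h2, M.act_iSup]
    refine iSup_congr fun j => ?_
    rw [M.act_mul]
    have hfix : M.act (M.act m (f j * e)) e = M.act m (f j * e) := (melt e he M m (f j)).2
    conv_rhs => rw [mul_assoc e (g j * c) e, M.act_mul, hfix, mul_assoc]
  rw [hmc, hom_iSup, resObj_iSup_val]
  refine iSup_congr fun j => ?_
  erw [h.2.2]
  rfl

theorem resFunctor_full (e : A) (he : e * e = e) {ι : Type u} {f g : ι → A}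
    (h1 : (1 : A) = ⨆ i, f i * e * g i) : (resFunctor e he).Full := by
  letI : UQuantale (Corner e) := cornerQuantale e he
  constructor
  intro M N h
  refine ⟨⟨fun m => ⨆ j, N.act (h.1 (melt e he M m (f j))).1 (g j), ?_, ?_⟩, ?_⟩
  · -- preserves sups
    intro s
    have hmelt : ∀ j, melt e he M (sSup s) (f j) = ⨆ m ∈ s, melt e he M m (f j) := by
      intro j
      apply Subtype.ext
      show M.act (sSup s) (f j * e) = _
      rw [M.sSup_act]
      simp only [resObj_iSup_val, subtype_iSup_val, resFunctorObj_iSup_val]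
      rfl
    have hh : ∀ j, (h.1 (⨆ m ∈ s, melt e he M m (f j))).1
        = ⨆ m ∈ s, (h.1 (melt e he M m (f j))).1 := by
      intro j
      simp only [hom_iSup, resObj_iSup_val, subtype_iSup_val, resFunctorObj_iSup_val]
      exact iSup_congr fun m => (congrArg Subtype.val (hom_iSup h _)).trans (resFunctorObj_iSup_val e he N _)
    have hh' : ∀ j, N.act (h.1 (⨆ m ∈ s, melt e he M m (f j))).1 (g j) = ⨆ m ∈ s, N.act (h.1 (melt e he M m (f j))).1 (g j) := fun j => by
      rw [hh j]; simp only [iSup_act]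
    simp only [hmelt]
    refine (iSup_congr hh').trans ?_
    rw [iSup_comm]
    exact iSup_congr fun m => iSup_comm
  · -- equivariance
    intro m a
    have hshift : ∀ j, melt e he M (M.act m a) (f j) = melt e he M m (a * f j) := by
      intro j
      apply Subtype.ext
      show M.act (M.act m a) (f j * e) = M.act m (a * f j * e)
      rw [← M.act_mul, mul_assoc]
    calc (⨆ j, N.act (h.1 (melt e he M (M.act m a) (f j))).1 (g j))
        = ⨆ j, ⨆ k, N.act (N.act (h.1 (melt e he M m (f k))).1
            (e * (g k * (a * f j)) * e)) (g j) := by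
          refine iSup_congr fun j => ?_
          rw [hshift j, keyexp e he h1 M N h m (a * f j), iSup_act]
      _ = ⨆ k, ⨆ j, N.act (h.1 (melt e he M m (f k))).1
            ((e * (g k * a)) * (f j * e * g j)) := by
          rw [iSup_comm]
          refine iSup_congr fun k => iSup_congr fun j => ?_
          rw [← N.act_mul]
          congr 1
          simp only [mul_assoc]
      _ = ⨆ k, N.act (h.1 (melt e he M m (f k))).1 (g k * a) := by
          refine iSup_congr fun k => ?_
          rw [← N.act_iSup, ← UQuantale.mul_iSup, ← h1, mul_one,
            act_e_absorb N (h.1 (melt e he M m (f k))).2]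
      _ = N.act (⨆ j, N.act (h.1 (melt e he M m (f j))).1 (g j)) a := by
          rw [iSup_act]
          exact iSup_congr fun k => by rw [← N.act_mul]
  · -- F.map φ = h
    apply Subtype.ext
    funext m
    apply Subtype.ext
    show (⨆ j, N.act (h.1 (melt e he M m.1 (f j))).1 (g j)) = (h.1 m).1
    have hm : ∀ j, melt e he M m.1 (f j)
        = ((resFunctor e he).obj M).act m (cornerEl e he (f j)) := by
      intro j
      apply Subtype.ext
      show M.act m.1 (f j * e) = M.act m.1 (e * f j * e)
      conv_rhs => rw [mul_assoc e (f j) e, act_e_absorb M m.2]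
    calc (⨆ j, N.act (h.1 (melt e he M m.1 (f j))).1 (g j))
        = ⨆ j, N.act (h.1 m).1 (e * (f j * e * g j)) := by
          refine iSup_congr fun j => ?_
          rw [hm j, h.2.2]
          show N.act (N.act (h.1 m).1 (e * f j * e)) (g j) = _
          rw [← N.act_mul]
          congr 1
          simp only [mul_assoc]
      _ = (h.1 m).1 := by
          rw [← N.act_iSup, ← UQuantale.mul_iSup, ← h1, mul_one, (h.1 m).2]

theorem corner_iSup_val (e : A) (he : e * e = e) {ι : Sort w} :
    letI : UQuantale (Corner e) := cornerQuantale e he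
    ∀ (t : ι → Corner e), (⨆ i, t i).1 = ⨆ i, (t i).1 :=
  fun t => subtype_iSup_val t

/-- `Ae = {a : A // a * e = a}` as a right `eAe`-module. -/
def aeMod (e : A) (he : e * e = e) : @QMod.{u,u} (Corner e) (cornerQuantale e he) :=
  letI : UQuantale (Corner e) := cornerQuantale e he
  { carrier := { a : A // a * e = a }
    act := fun y x => ⟨y.1 * x.1, by rw [mul_assoc, corner_mul_e he x.2]⟩
    act_one := fun y => Subtype.ext y.2
    act_mul := fun y a b => Subtype.ext (by
      show y.1 * (a.1 * b.1) = y.1 * a.1 * b.1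
      rw [mul_assoc])
    sSup_act := fun s x => by
      apply Subtype.ext
      show sSup (Subtype.val '' s) * x.1 = _
      rw [UQuantale.sSup_mul]
      simp only [subtype_iSup_val]
      rw [iSup_image]
    act_sSup := fun y s => by
      apply Subtype.ext
      show y.1 * sSup (Subtype.val '' s) = _
      rw [UQuantale.mul_sSup]
      simp only [subtype_iSup_val]
      rw [iSup_image] }

theorem aeMod_iSup_val (e : A) (he : e * e = e) {ι : Sort w} :
    letI : UQuantale (Corner e) := cornerQuantale e he
    ∀ (t : ι → (aeMod e he).carrier), (⨆ i, t i).1 = ⨆ i, (t i).1 :=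
  fun t => subtype_iSup_val t

/-- `G(N) = Hom_{eAe}(Ae, N)` as a right `A`-module. -/
def homMod (e : A) (he : e * e = e) (N : @QMod.{u,u} (Corner e) (cornerQuantale e he)) :
    QMod.{u,u} A :=
  letI : UQuantale (Corner e) := cornerQuantale e he
  { carrier := (aeMod e he ⟶ N)
    act := fun φ a => ⟨fun y => φ.1 ⟨a * y.1, by rw [mul_assoc, y.2]⟩, by
      constructor
      · intro s
        have : (⟨a * (sSup s).1, by rw [mul_assoc, (sSup s).2]⟩ : (aeMod e he).carrier)
            = ⨆ y ∈ s, (⟨a * y.1, by rw [mul_assoc, y.2]⟩ : (aeMod e he).carrier) := by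
          apply Subtype.ext
          show a * sSup (Subtype.val '' s) = _
          rw [UQuantale.mul_sSup]
          simp only [aeMod_iSup_val, subtype_iSup_val]
          erw [iSup_image]
          rfl
        refine Eq.trans (congrArg φ.1 this) ?_
        erw [hom_iSup]
        exact iSup_congr fun m => hom_iSup φ _
      · intro y x
        have : (⟨a * ((aeMod e he).act y x).1, by
            rw [mul_assoc, ((aeMod e he).act y x).2]⟩ : (aeMod e he).carrier)
            = (aeMod e he).act ⟨a * y.1, by rw [mul_assoc, y.2]⟩ x := by
          apply Subtype.ext
          show a * (y.1 * x.1) = a * y.1 * x.1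
          rw [mul_assoc]
        exact Eq.trans (congrArg φ.1 this) (φ.2.2 _ x)⟩
    act_one := fun φ => Subtype.ext (funext fun y => congrArg φ.1 (Subtype.ext (one_mul y.1)))
    act_mul := fun φ a b => Subtype.ext (funext fun y =>
      congrArg φ.1 (Subtype.ext (mul_assoc a b y.1)))
    sSup_act := fun s a => by
      apply Subtype.ext
      funext y
      show (sSup s).1 _ = _
      erw [sSup_hom_apply, iSup_hom_apply]
      exact iSup_congr fun m => by symm; exact iSup_hom_apply _ _
    act_sSup := fun φ s => by
      apply Subtype.ext
      funext y
      have : (⟨sSup s * y.1, by rw [mul_assoc, y.2]⟩ : (aeMod e he).carrier)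
          = ⨆ a ∈ s, (⟨a * y.1, by rw [mul_assoc, y.2]⟩ : (aeMod e he).carrier) := by
        apply Subtype.ext
        show sSup s * y.1 = _
        rw [UQuantale.sSup_mul]
        simp only [aeMod_iSup_val, subtype_iSup_val]
      refine Eq.trans (congrArg φ.1 this) ?_
      erw [hom_iSup]
      refine Eq.trans (iSup_congr fun a => hom_iSup φ _) ?_
      simp only [iSup_hom_apply, sSup_hom_apply] }

theorem corner_pf {e : A} (he : e * e = e) {y : A} (hy : y * e = y) :
    e * (e * y) * e = e * y := by
  rw [mul_assoc, mul_assoc, hy, ← mul_assoc, he]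

theorem homMod_iSup_apply (e : A) (he : e * e = e)
    (N : @QMod.{u,u} (Corner e) (cornerQuantale e he)) {ι : Sort w}
    (t : ι → (homMod e he N).carrier) (y : @QMod.carrier _ (cornerQuantale e he) (aeMod e he)) :
    (⨆ i, t i).1 y = ⨆ i, (t i).1 y := by
  letI : UQuantale (Corner e) := cornerQuantale e he
  exact iSup_hom_apply t y

/-- The counit inverse: `n ↦ (y ↦ n·(e*y))`. -/
def counitInv (e : A) (he : e * e = e) (N : @QMod.{u,u} (Corner e) (cornerQuantale e he))
    (n : @QMod.carrier _ (cornerQuantale e he) N) :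
    @QMod.carrier _ (cornerQuantale e he) (resObj e he (homMod e he N)) :=
  letI : UQuantale (Corner e) := cornerQuantale e he
  ⟨⟨fun y => N.act n ⟨e * y.1, corner_pf he y.2⟩, by
    constructor
    · intro s
      have h2 : (⟨e * (sSup s).1, corner_pf he (sSup s).2⟩ : Corner e)
          = ⨆ y ∈ s, (⟨e * y.1, corner_pf he y.2⟩ : Corner e) := by
        apply Subtype.ext
        show e * sSup (Subtype.val '' s) = _
        rw [UQuantale.mul_sSup]
        simp only [corner_iSup_val e he, subtype_iSup_val]
        erw [iSup_image]
        rfl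
      refine Eq.trans (congrArg (N.act n) h2) ?_
      erw [N.act_iSup]
      exact iSup_congr fun m => N.act_iSup n _
    · intro y x
      show N.act n ⟨e * (y.1 * x.1), _⟩ = N.act (N.act n ⟨e * y.1, corner_pf he y.2⟩) x
      rw [← N.act_mul]
      congr 1
      apply Subtype.ext
      show e * (y.1 * x.1) = (e * y.1) * x.1
      rw [mul_assoc]⟩, by
    apply Subtype.ext
    funext y
    show N.act n ⟨e * (e * y.1), _⟩ = N.act n ⟨e * y.1, _⟩
    exact congrArg (N.act n) (Subtype.ext (e_mul_e_mul he y.1))⟩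

theorem resFunctor_essSurj (e : A) (he : e * e = e) : (resFunctor e he).EssSurj := by
  letI : UQuantale (Corner e) := cornerQuantale e he
  constructor
  intro N
  refine ⟨homMod e he N, ⟨Iso.mk ?_ ?_ ?_ ?_⟩⟩
  · -- hom : counit
    refine ⟨fun φ => φ.1.1 ⟨e, he⟩, ?_, ?_⟩
    · intro s
      show (sSup (Subtype.val '' s)).1 ⟨e, he⟩ = _
      erw [sSup_hom_apply, iSup_image]
      rfl
    · intro φ x
      show φ.1.1 ⟨x.1 * e, _⟩ = N.act (φ.1.1 ⟨e, he⟩) x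
      rw [← φ.1.2.2 ⟨e, he⟩ x]
      exact congrArg φ.1.1 (Subtype.ext
        (by show x.1 * e = e * x.1
            rw [corner_mul_e he x.2, corner_e_mul he x.2]))
  · -- inv
    refine ⟨fun n => counitInv e he N n, ?_, ?_⟩
    · intro s
      apply Subtype.ext
      apply Subtype.ext
      funext y
      show N.act (sSup s) _ = _
      rw [N.sSup_act]
      simp only [resObj_iSup_val, resFunctorObj_iSup_val, subtype_iSup_val, iSup_hom_apply,
        sSup_hom_apply, homMod_iSup_apply]
      exact iSup_congr fun m => by symm; exact (congrArg (fun x => x.1 y) (resObj_iSup_val e he (homMod e he N) _)).trans (homMod_iSup_apply e he N _ y)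
    · intro n x
      apply Subtype.ext
      apply Subtype.ext
      funext y
      show N.act (N.act n x) ⟨e * y.1, _⟩ = N.act n ⟨e * (x.1 * y.1), _⟩
      rw [← N.act_mul]
      congr 1
      apply Subtype.ext
      show x.1 * (e * y.1) = e * (x.1 * y.1)
      rw [← mul_assoc, corner_mul_e he x.2, ← mul_assoc, corner_e_mul he x.2]
  · -- hom_inv_id
    apply Subtype.ext
    funext φ
    apply Subtype.ext
    apply Subtype.ext
    funext y
    show N.act (φ.1.1 ⟨e, he⟩) ⟨e * y.1, _⟩ = φ.1.1 y
    rw [← φ.1.2.2 ⟨e, he⟩ ⟨e * y.1, corner_pf he y.2⟩]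
    have h2 : (aeMod e he).act ⟨e, he⟩ ⟨e * y.1, corner_pf he y.2⟩
        = (⟨e * y.1, by rw [mul_assoc, y.2]⟩ : (aeMod e he).carrier) := by
      apply Subtype.ext
      show e * (e * y.1) = e * y.1
      exact e_mul_e_mul he y.1
    rw [h2]
    exact congrFun (congrArg Subtype.val φ.2) y
  · -- inv_hom_id
    apply Subtype.ext
    funext n
    show N.act n ⟨e * e, _⟩ = n
    have h2 : (⟨e * e, corner_pf he he⟩ : Corner e) = 1 := Subtype.ext he
    rw [h2, N.act_one]

end MoritaProof
/-! ### STATEMENT 12 -/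

/-- if `e` is a full idempotent in a quantale `A` (`e*e = e` and
`AeA = A`), then `A` and the corner quantale `eAe` are Morita equivalent. -/
theorem morita_corner_of_full {A : Type u} [UQuantale A] (e : A)
    (hfull : IsFullIdempotent e) :
    letI : UQuantale { x : A // e * x * e = x } := cornerQuantale e hfull.1
    MoritaEquivalent A { x : A // e * x * e = x } := by
  letI : UQuantale { x : A // e * x * e = x } := cornerQuantale e hfull.1
  obtain ⟨ι, f, g, h1⟩ := hfull.2 1
  haveI := resFunctor_faithful e hfull.1 h1
  haveI := resFunctor_full e hfull.1 h1
  haveI := resFunctor_essSurj e hfull.1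
  haveI : (resFunctor e hfull.1).IsEquivalence := { }
  exact ⟨(resFunctor e hfull.1).asEquivalence⟩
end

section
/- Let A be a quantale, X a set, and a ∈ Mat_X(A) an idempotent matrix (a⋆a = a). Let aA^(X) denote the splitting object of the idempotent A-module endomorphism a·− : A^(X) → A^(X). Then there are isomorphisms of sup-lattices Hom_A(aA^(X), A^(X)) ≅ Mat_X(A)a and Hom_A(aA^(X), aA^(X)) ≅ a Mat_X(A) a, where Mat_X(A)a is the image of the idempotent map −⋆a : Mat_X(A) → Mat_X(A) and a Mat_X(A) a is the image of the idempotent map b ↦ a⋆b⋆a. -/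
open CategoryTheory Set

universe u v w

/-! ### Matrices with values in a quantale -/

section Matrices

/-- The type of `A`-matrices of size `X × X`: maps `X × X → A`. -/
def Mat (X : Type u) (A : Type u) : Type u := X × X → A

variable (X : Type u) (A : Type u) [UQuantale A]

instance : CompleteLattice (Mat X A) :=
  inferInstanceAs (CompleteLattice (X × X → A))

theorem mat_sSup_apply (s : Set (Mat X A)) (p : X × X) : sSup s p = ⨆ a ∈ s, a p :=
  sSup_apply.trans (iSup_subtype'' s fun a => a p)

theorem mat_iSup_apply {ι : Sort w} (f : ι → Mat X A) (p : X × X) :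
    (⨆ i, f i) p = ⨆ i, f i p :=
  iSup_apply

/-- Matrix product: `(a ⋆ b)(x,z) = ⨆ y, a(x,y) * b(y,z)`. -/
def matMul (a b : Mat X A) : Mat X A :=
  fun p => ⨆ y : X, a (p.1, y) * b (y, p.2)

open Classical in
/-- The identity matrix: the unit of `A` on the diagonal and `⊥` elsewhere. -/
noncomputable def matId : Mat X A :=
  fun p => if p.1 = p.2 then (1 : A) else ⊥

theorem mat_assoc (a b c : Mat X A) :
    matMul X A (matMul X A a b) c = matMul X A a (matMul X A b c) := by
  funext p
  show ⨆ z, (⨆ y, a (p.1, y) * b (y, z)) * c (z, p.2) =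
    ⨆ y, a (p.1, y) * ⨆ z, b (y, z) * c (z, p.2)
  simp only [UQuantale.iSup_mul, UQuantale.mul_iSup, mul_assoc]
  exact iSup_comm

theorem mat_one_mul (a : Mat X A) : matMul X A (matId X A) a = a := by
  classical
  funext p
  show ⨆ y, matId X A (p.1, y) * a (y, p.2) = a p
  apply le_antisymm
  · refine iSup_le fun y => ?_
    show (if p.1 = y then (1 : A) else ⊥) * a (y, p.2) ≤ a p
    split_ifs with h
    · subst h; rw [one_mul]
    · rw [UQuantale.bot_mul]; exact bot_le
  · have h1 : a p = matId X A (p.1, p.1) * a (p.1, p.2) := by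
      show a p = (if p.1 = p.1 then (1 : A) else ⊥) * a (p.1, p.2)
      rw [if_pos rfl, one_mul]
    exact h1.le.trans (le_iSup (fun y => matId X A (p.1, y) * a (y, p.2)) p.1)

theorem mat_mul_one (a : Mat X A) : matMul X A a (matId X A) = a := by
  classical
  funext p
  show ⨆ y, a (p.1, y) * matId X A (y, p.2) = a p
  apply le_antisymm
  · refine iSup_le fun y => ?_
    show a (p.1, y) * (if y = p.2 then (1 : A) else ⊥) ≤ a p
    split_ifs with h
    · subst h; rw [mul_one]
    · rw [UQuantale.mul_bot]; exact bot_le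
  · have h1 : a p = a (p.1, p.2) * matId X A (p.2, p.2) := by
      show a p = a (p.1, p.2) * (if p.2 = p.2 then (1 : A) else ⊥)
      rw [if_pos rfl, mul_one]
    exact h1.le.trans (le_iSup (fun y => a (p.1, y) * matId X A (y, p.2)) p.2)

theorem mat_mul_sSup (a : Mat X A) (s : Set (Mat X A)) :
    matMul X A a (sSup s) = ⨆ b ∈ s, matMul X A a b := by
  funext p
  show ⨆ y, a (p.1, y) * sSup s (y, p.2) = (⨆ b ∈ s, matMul X A a b) p
  simp only [mat_sSup_apply, mat_iSup_apply]
  calc ⨆ y, a (p.1, y) * ⨆ b ∈ s, b (y, p.2)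
      = ⨆ y, ⨆ b ∈ s, a (p.1, y) * b (y, p.2) := by
        simp only [UQuantale.mul_iSup]
    _ = ⨆ b ∈ s, ⨆ y, a (p.1, y) * b (y, p.2) := by
        rw [iSup_comm]
        exact iSup_congr fun b => iSup_comm
    _ = ⨆ b ∈ s, matMul X A a b p := rfl

theorem mat_sSup_mul (s : Set (Mat X A)) (b : Mat X A) :
    matMul X A (sSup s) b = ⨆ a ∈ s, matMul X A a b := by
  funext p
  show ⨆ y, sSup s (p.1, y) * b (y, p.2) = (⨆ a ∈ s, matMul X A a b) p
  simp only [mat_sSup_apply, mat_iSup_apply]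
  calc ⨆ y, (⨆ a ∈ s, a (p.1, y)) * b (y, p.2)
      = ⨆ y, ⨆ a ∈ s, a (p.1, y) * b (y, p.2) := by
        simp only [UQuantale.iSup_mul]
    _ = ⨆ a ∈ s, ⨆ y, a (p.1, y) * b (y, p.2) := by
        rw [iSup_comm]
        exact iSup_congr fun a => iSup_comm
    _ = ⨆ a ∈ s, matMul X A a b p := rfl

/-- The quantale of `A`-valued `X × X`-matrices: pointwise suprema, matrix
multiplication, identity matrix as unit. -/
noncomputable instance : UQuantale (Mat X A) :=
  { (inferInstanceAs (CompleteLattice (Mat X A)) : CompleteLattice (Mat X A)) with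
    mul := matMul X A
    one := matId X A
    mul_assoc := mat_assoc X A
    one_mul := mat_one_mul X A
    mul_one := mat_mul_one X A
    mul_sSup := mat_mul_sSup X A
    sSup_mul := mat_sSup_mul X A }

theorem matMul_def (a b : Mat X A) : a * b = matMul X A a b := rfl

theorem matId_def : (1 : Mat X A) = matId X A := rfl

end Matrices

/-! ### The free module `A^(X)` and matrices as its endomorphisms -/

section Free

variable (A : Type u) [UQuantale A] (X : Type u)

/-- The free right `A`-module `A^(X)` on a set `X`: the coproduct of `X` copies of
`A`, isomorphic to the product `A^X`, realized as the module of all maps `X → A`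
with pointwise suprema and pointwise action. -/
def freeQMod : QMod.{u, u} A where
  carrier := X → A
  act f a := fun x => f x * a
  act_one f := by funext x; exact mul_one _
  act_mul f a b := by funext x; exact (mul_assoc _ _ _).symm
  sSup_act s a := by
    funext x
    simp only [sSup_apply, iSup_apply, UQuantale.iSup_mul]
    exact iSup_subtype'' s fun f => f x * a
  act_sSup f s := by
    funext x
    simp only [iSup_apply, UQuantale.mul_sSup]

theorem free_iSup_apply {ι : Sort w} (F : ι → (freeQMod A X).carrier) (x : X) :
    (⨆ i, F i) x = ⨆ i, F i x :=
  iSup_apply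

/-- The endomorphism `a · - : A^(X) ⟶ A^(X)` of the free module determined by a
matrix `a`, namely `(a · f) x = ⨆ x', a (x, x') * f x'`. -/
noncomputable def matToEnd (a : Mat X A) : freeQMod A X ⟶ freeQMod A X := by
  refine ⟨fun f x => ⨆ y, a (x, y) * f y, ?_, ?_⟩
  · intro s
    funext x
    have h1 : (sSup s : X → A) = fun y => ⨆ g ∈ s, g y := by
      funext y; exact sSup_apply.trans (iSup_subtype'' s fun g => g y)
    show ⨆ y, a (x, y) * sSup s y = _
    erw [h1]
    simp only [iSup_apply]
    calc ⨆ y, a (x, y) * ⨆ g ∈ s, g y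
        = ⨆ y, ⨆ g ∈ s, a (x, y) * g y := by simp only [UQuantale.mul_iSup]
      _ = ⨆ g ∈ s, ⨆ y, a (x, y) * g y := by
          rw [iSup_comm]; exact iSup_congr fun g => iSup_comm
      _ = (⨆ m ∈ s, fun x => ⨆ y, a (x, y) * m y) x := by
          simp only [iSup_apply]
  · intro f b
    funext x
    show ⨆ y, a (x, y) * (f y * b) = (⨆ y, a (x, y) * f y) * b
    rw [UQuantale.iSup_mul]
    simp only [mul_assoc]

end Free

/-! ### Auxiliary: matrices vs endomorphisms of the free module -/

section SplittingProof

variable {A : Type u} [UQuantale A] {X : Type u}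

open Classical in
noncomputable def delta (X : Type u) (A : Type u) [UQuantale A] (y : X) :
    (freeQMod A X).carrier :=
  fun z => if z = y then (1 : A) else ⊥

theorem delta_sup (f : X → A) (z : X) :
    ⨆ y, delta X A y z * f y = f z := by
  classical
  apply le_antisymm
  · refine iSup_le fun y => ?_
    show (if z = y then (1 : A) else ⊥) * f y ≤ f z
    split_ifs with h
    · subst h; rw [one_mul]
    · rw [UQuantale.bot_mul]; exact bot_le
  · have h1 : f z = delta X A z z * f z := by
      show f z = (if z = z then (1 : A) else ⊥) * f z
      rw [if_pos rfl, one_mul]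
    exact h1.le.trans (le_iSup (fun y => delta X A y z * f y) z)

noncomputable def matOf (g : freeQMod A X ⟶ freeQMod A X) : Mat X A :=
  fun q => g.1 (delta X A q.2) q.1

theorem matToEnd_matOf (g : freeQMod A X ⟶ freeQMod A X) :
    matToEnd A X (matOf g) = g := by
  apply Subtype.ext; funext f
  have hf : f = ⨆ y, (freeQMod A X).act (delta X A y) (f y) := by
    funext z
    rw [free_iSup_apply A X]
    exact (delta_sup f z).symm
  show (fun x => ⨆ y, matOf g (x, y) * f y) = g.1 f
  conv_rhs => rw [hf]
  rw [QMod.hom_iSup]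
  funext x
  rw [free_iSup_apply A X]
  exact iSup_congr fun y => by rw [g.2.2]; rfl

theorem matOf_matToEnd (b : Mat X A) : matOf (matToEnd A X b) = b := by
  classical
  funext q
  show ⨆ z, b (q.1, z) * delta X A q.2 z = b q
  apply le_antisymm
  · refine iSup_le fun z => ?_
    show b (q.1, z) * (if z = q.2 then (1 : A) else ⊥) ≤ b q
    split_ifs with h
    · subst h; rw [mul_one]
    · rw [UQuantale.mul_bot]; exact bot_le
  · have h1 : b q = b (q.1, q.2) * delta X A q.2 q.2 := by
      show b q = b (q.1, q.2) * (if q.2 = q.2 then (1 : A) else ⊥)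
      rw [if_pos rfl, mul_one]
    exact h1.le.trans (le_iSup (fun z => b (q.1, z) * delta X A q.2 z) q.2)

theorem matToEnd_injective : Function.Injective (matToEnd A X) := by
  intro b c h
  rw [← matOf_matToEnd (A := A) (X := X) b, ← matOf_matToEnd (A := A) (X := X) c, h]

theorem matToEnd_mul (b c : Mat X A) :
    matToEnd A X (b * c) = matToEnd A X c ≫ matToEnd A X b := by
  apply Subtype.ext; funext f; funext x
  show ⨆ z, (⨆ y, b (x, y) * c (y, z)) * f z = ⨆ y, b (x, y) * ⨆ z, c (y, z) * f z
  simp only [UQuantale.iSup_mul, UQuantale.mul_iSup, mul_assoc]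
  exact iSup_comm

end SplittingProof

/-! ### STATEMENT 15 -/

/-- let `a` be an idempotent matrix over a quantale `A` and let
`P` (with `p : A^(X) ⟶ P`, `i : P ⟶ A^(X)`, `i ∘ p = a·-`, `p ∘ i = id`) be a
splitting object `aA^(X)` of the idempotent endomorphism `a · -` of the free module
`A^(X)`.  Then there are isomorphisms of sup-lattices
`Hom_A(aA^(X), A^(X)) ≅ Mat_X(A)a` and `Hom_A(aA^(X), aA^(X)) ≅ a Mat_X(A) a`,
where `Mat_X(A)a = {b // b⋆a = b}` is the image of the idempotent map `-⋆a` and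
`a Mat_X(A) a = {b // a⋆b⋆a = b}` is the image of the idempotent map `b ↦ a⋆b⋆a`. -/
theorem splitting_hom_lattices (A : Type u) [UQuantale A] (X : Type u)
    (a : Mat X A) (ha : a * a = a)
    (P : QMod.{u, u} A) (p : freeQMod A X ⟶ P) (i : P ⟶ freeQMod A X)
    (hip : p ≫ i = matToEnd A X a) (hpi : i ≫ p = 𝟙 P) :
    (∃ φ : (P ⟶ freeQMod A X) → { b : Mat X A // b * a = b },
      Function.Bijective φ ∧ ∀ s, φ (sSup s) = ⨆ f ∈ s, φ f) ∧
    (∃ ψ : (P ⟶ P) → { b : Mat X A // a * b * a = b },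
      Function.Bijective ψ ∧ ∀ s, ψ (sSup s) = ⨆ f ∈ s, ψ f) := by
  have hip' : ∀ {N : QMod.{u, u} A} (f : P ⟶ N), i ≫ p ≫ f = f := by
    intro N f
    rw [← Category.assoc, hpi, Category.id_comp]
  constructor
  · -- Hom(P, A^(X)) ≅ Mat_X(A)a
    have hφmem : ∀ f : P ⟶ freeQMod A X, matOf (p ≫ f) * a = matOf (p ≫ f) := by
      intro f
      apply matToEnd_injective
      rw [matToEnd_mul, matToEnd_matOf, ← hip, Category.assoc, hip']
    refine ⟨fun f => ⟨matOf (p ≫ f), hφmem f⟩, ⟨?_, ?_⟩, ?_⟩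
    · -- injective
      intro f g h
      have h1 : matOf (p ≫ f) = matOf (p ≫ g) := congrArg Subtype.val h
      have h2 : p ≫ f = p ≫ g := by
        rw [← matToEnd_matOf (p ≫ f), ← matToEnd_matOf (p ≫ g), h1]
      rw [← hip' f, ← hip' g, h2]
    · -- surjective
      rintro ⟨b, hb⟩
      refine ⟨i ≫ matToEnd A X b, Subtype.ext ?_⟩
      show matOf (p ≫ i ≫ matToEnd A X b) = b
      rw [← Category.assoc, hip, ← matToEnd_mul, hb, matOf_matToEnd]
    · -- preserves suprema
      intro s
      apply Subtype.ext
      show matOf (p ≫ sSup s) = _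
      have hval : (⨆ f ∈ s, (⟨matOf (p ≫ f), hφmem f⟩ :
          { b : Mat X A // b * a = b })).1 = ⨆ f ∈ s, matOf (p ≫ f) := by
        rw [subtype_iSup_val]
        exact iSup_congr fun f => subtype_iSup_val _
      rw [hval]
      funext q
      show (sSup s).1 (p.1 (delta X A q.2)) q.1 = _
      rw [QMod.sSup_hom_apply, mat_iSup_apply, free_iSup_apply A X]
      exact iSup_congr fun f => by
        rw [free_iSup_apply A X, mat_iSup_apply]; rfl
  · -- Hom(P, P) ≅ a Mat_X(A) a
    have hψmem : ∀ g : P ⟶ P, a * matOf (p ≫ g ≫ i) * a = matOf (p ≫ g ≫ i) := by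
      intro g
      apply matToEnd_injective
      rw [matToEnd_mul, matToEnd_mul, matToEnd_matOf, ← hip]
      simp only [Category.assoc, hip']
    refine ⟨fun g => ⟨matOf (p ≫ g ≫ i), hψmem g⟩, ⟨?_, ?_⟩, ?_⟩
    · -- injective
      intro f g h
      have h1 : matOf (p ≫ f ≫ i) = matOf (p ≫ g ≫ i) := congrArg Subtype.val h
      have h2 : p ≫ f ≫ i = p ≫ g ≫ i := by
        rw [← matToEnd_matOf (p ≫ f ≫ i), ← matToEnd_matOf (p ≫ g ≫ i), h1]
      have h3 : i ≫ (p ≫ f ≫ i) ≫ p = i ≫ (p ≫ g ≫ i) ≫ p := by rw [h2]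
      simpa only [Category.assoc, hip', hpi, Category.comp_id] using h3
    · -- surjective
      rintro ⟨b, hb⟩
      refine ⟨i ≫ matToEnd A X b ≫ p, Subtype.ext ?_⟩
      show matOf (p ≫ (i ≫ matToEnd A X b ≫ p) ≫ i) = b
      have h2 : p ≫ (i ≫ matToEnd A X b ≫ p) ≫ i =
          (p ≫ i) ≫ matToEnd A X b ≫ p ≫ i := by simp only [Category.assoc]
      rw [h2, hip, ← matToEnd_mul, ← matToEnd_mul, hb, matOf_matToEnd]
    · -- preserves suprema
      intro s
      apply Subtype.ext
      show matOf (p ≫ sSup s ≫ i) = _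
      have hval : (⨆ g ∈ s, (⟨matOf (p ≫ g ≫ i), hψmem g⟩ :
          { b : Mat X A // a * b * a = b })).1 = ⨆ g ∈ s, matOf (p ≫ g ≫ i) := by
        rw [subtype_iSup_val]
        exact iSup_congr fun g => subtype_iSup_val _
      rw [hval]
      funext q
      show i.1 ((sSup s).1 (p.1 (delta X A q.2))) q.1 = _
      rw [QMod.sSup_hom_apply]
      have hi : i.1 (⨆ g ∈ s, g.1 (p.1 (delta X A q.2))) =
          ⨆ g ∈ s, i.1 (g.1 (p.1 (delta X A q.2))) := by
        rw [QMod.hom_iSup]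
        exact iSup_congr fun g => QMod.hom_iSup i _
      rw [hi, mat_iSup_apply, free_iSup_apply A X]
      exact iSup_congr fun g => by
        rw [free_iSup_apply A X, mat_iSup_apply]; rfl
end
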